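/- arXiv:1703.00918 — 3 statements merged into one kernel-verified Lean document; each statement's English description precedes it below -/
import Mathlib

section
/- Let n ≥ 2 and let X = μ + R•(A *ᵥ U) be an elliptically distributed random vector with benchmark Y = a ⬝ᵥ X and regression vector β = (1/â) • (Σ *ᵥ a). Define the residuals ε_i := X_i − β_i·Y for i = 1,…,n. Then for every Borel set B₁ ⊆ ℝ such that B := {Y ∈ B₁} has P[B] > 0 and every i, Cov_B[Y, ε_i] = 0; that is, the least-squares regression of each coordinate X_i on Y remains valid under conditioning on events determined by Y. -/
open MeasureTheory ProbabilityTheory Matrix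

/-- Expectation of a real random variable under the conditional probability `P[|B]`. -/
noncomputable def condE {Ω : Type*} [MeasurableSpace Ω] (P : Measure Ω) (B : Set Ω)
    (f : Ω → ℝ) : ℝ :=
  ∫ ω, f ω ∂(P[|B])

/-- Conditional covariance on the event `B`. -/
noncomputable def condCov {Ω : Type*} [MeasurableSpace Ω] (P : Measure Ω) (B : Set Ω)
    (f g : Ω → ℝ) : ℝ :=
  condE P B fun ω => (f ω - condE P B f) * (g ω - condE P B g)

private lemma integrable_mul_of_L2 {Ω : Type*} [MeasurableSpace Ω] {P : Measure Ω}
    {f g : Ω → ℝ} (hf : MemLp f 2 P) (hg : MemLp g 2 P) :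
    Integrable (fun ω => f ω * g ω) P := by
  have h : Integrable (fun ω => (f ω ^ 2 + g ω ^ 2) / 2) P :=
    (hf.integrable_sq.add hg.integrable_sq).div_const 2
  refine h.mono' (hf.aestronglyMeasurable.mul hg.aestronglyMeasurable) (ae_of_all _ fun ω => ?_)
  rw [Real.norm_eq_abs, abs_mul]
  nlinarith [sq_nonneg (|f ω| - |g ω|), sq_abs (f ω), sq_abs (g ω), abs_nonneg (f ω),
    abs_nonneg (g ω)]

private lemma vmv_mulVec {n : ℕ} (b : Fin n → ℝ) (u : Fin n → ℝ) :
    vecMulVec b b *ᵥ u = (b ⬝ᵥ u) • b := by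
  funext j
  simp only [Matrix.mulVec, Matrix.vecMulVec_apply, dotProduct, Pi.smul_apply,
    smul_eq_mul, Finset.sum_mul]
  exact Finset.sum_congr rfl fun k _ => by ring

private lemma vmv_sq {n : ℕ} (b : Fin n → ℝ) :
    vecMulVec b b * vecMulVec b b = (b ⬝ᵥ b) • vecMulVec b b := by
  ext j k
  simp only [Matrix.mul_apply, Matrix.vecMulVec_apply, Matrix.smul_apply, smul_eq_mul,
    dotProduct, Finset.sum_mul]
  exact Finset.sum_congr rfl fun l _ => by ring

private lemma refl_orth {n : ℕ} (b : Fin n → ℝ) (hnb : b ⬝ᵥ b ≠ 0) :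
    (((2 / (b ⬝ᵥ b)) • vecMulVec b b - 1) : Matrix (Fin n) (Fin n) ℝ) *
      ((2 / (b ⬝ᵥ b)) • vecMulVec b b - 1)ᵀ = 1 := by
  have hsymm : ((2 / (b ⬝ᵥ b)) • vecMulVec b b - 1 : Matrix (Fin n) (Fin n) ℝ)ᵀ
      = (2 / (b ⬝ᵥ b)) • vecMulVec b b - 1 := by
    ext j k
    simp only [Matrix.transpose_apply, Matrix.sub_apply, Matrix.smul_apply,
      Matrix.vecMulVec_apply, Matrix.one_apply, smul_eq_mul, eq_comm]
    ring_nf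
  rw [hsymm, sub_mul, mul_sub, mul_sub, Matrix.smul_mul, Matrix.mul_smul, smul_smul,
    vmv_sq, one_mul, mul_one, smul_smul]
  have h : 2 / (b ⬝ᵥ b) * (2 / (b ⬝ᵥ b)) * (b ⬝ᵥ b) = 2 / (b ⬝ᵥ b) + 2 / (b ⬝ᵥ b) := by
    field_simp; ring
  rw [h, add_smul]
  simp only [mul_one, one_mul, neg_smul, one_smul, two_smul]
  abel

private lemma refl_flip {n : ℕ} (A : Matrix (Fin n) (Fin n) ℝ) (b β : Fin n → ℝ) (i : Fin n)
    (hnb : b ⬝ᵥ b ≠ 0) (hβ : β i = (1 / (b ⬝ᵥ b)) * (A *ᵥ b) i) (u : Fin n → ℝ) :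
    ((A *ᵥ (((2 / (b ⬝ᵥ b)) • vecMulVec b b - 1) *ᵥ u)) i
      - β i * (b ⬝ᵥ (((2 / (b ⬝ᵥ b)) • vecMulVec b b - 1) *ᵥ u))
    = -((A *ᵥ u) i - β i * (b ⬝ᵥ u)))
    ∧ b ⬝ᵥ (((2 / (b ⬝ᵥ b)) • vecMulVec b b - 1) *ᵥ u) = b ⬝ᵥ u := by
  have hOu : ((2 / (b ⬝ᵥ b)) • vecMulVec b b - 1) *ᵥ u
      = ((2 / (b ⬝ᵥ b)) * (b ⬝ᵥ u)) • b - u := by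
    rw [Matrix.sub_mulVec, Matrix.smul_mulVec, vmv_mulVec, Matrix.one_mulVec, smul_smul]
  have hb2 : b ⬝ᵥ (((2 / (b ⬝ᵥ b)) * (b ⬝ᵥ u)) • b - u) = b ⬝ᵥ u := by
    rw [dotProduct_sub, dotProduct_smul, smul_eq_mul]
    field_simp
    ring
  constructor
  · rw [hOu, hb2, Matrix.mulVec_sub, Matrix.mulVec_smul]
    simp only [Pi.sub_apply, Pi.smul_apply, smul_eq_mul, hβ]
    field_simp
    ring
  · rw [hOu, hb2]

theorem regression_residuals_uncorrelated_under_conditioning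
    {Ω : Type*} [MeasurableSpace Ω] (P : Measure Ω) [IsProbabilityMeasure P]
    (n : ℕ) (hn : 2 ≤ n)
    (R : Ω → ℝ) (U : Ω → Fin n → ℝ) (hR : Measurable R) (hU : Measurable U)
    (hRpos : ∀ᵐ ω ∂P, 0 < R ω)
    (hR2 : ∫ ω, R ω ^ 2 ∂P = (n : ℝ))
    (hRL2 : MemLp R 2 P)
    (hUsphere : ∀ᵐ ω ∂P, ∑ i, U ω i ^ 2 = 1)
    (hUrot : ∀ O : Matrix (Fin n) (Fin n) ℝ, O * Oᵀ = 1 →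
      Measure.map (fun ω => O *ᵥ U ω) P = Measure.map U P)
    (hindep : IndepFun R U P)
    (μv : Fin n → ℝ) (A : Matrix (Fin n) (Fin n) ℝ) (hA : IsUnit A.det)
    (a : Fin n → ℝ) (ha : a ≠ 0)
    (X : Ω → Fin n → ℝ) (hX : X = fun ω => μv + R ω • (A *ᵥ U ω))
    (Y : Ω → ℝ) (hY : Y = fun ω => a ⬝ᵥ X ω)
    (hXL2 : ∀ i, MemLp (fun ω => X ω i) 2 P)
    (S : Matrix (Fin n) (Fin n) ℝ) (hS : S = A * Aᵀ)
    (ahat : ℝ) (hahat : ahat = a ⬝ᵥ (S *ᵥ a))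
    (β : Fin n → ℝ) (hβ : β = (1 / ahat) • (S *ᵥ a))
    (ε : Fin n → Ω → ℝ) (hε : ε = fun i ω => X ω i - β i * Y ω)
    (B₁ : Set ℝ) (hB₁ : MeasurableSet B₁)
    (B : Set Ω) (hB : B = Y ⁻¹' B₁) (hBpos : 0 < P B) :
    ∀ i, condCov P B Y (ε i) = 0 := by
  intro i
  -- the vector b = Aᵀ a and its norm
  set b : Fin n → ℝ := Aᵀ *ᵥ a with hbdef
  have hb : b ≠ 0 := by
    intro h
    apply ha
    have hAt : IsUnit Aᵀ.det := by rwa [Matrix.det_transpose]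
    have hinj := Matrix.mulVec_injective_iff_isUnit.mpr ((Matrix.isUnit_iff_isUnit_det Aᵀ).mpr hAt)
    have h0 : Aᵀ *ᵥ a = Aᵀ *ᵥ 0 := by simpa [Matrix.mulVec_zero] using h
    exact hinj h0
  have hnb : (0:ℝ) < b ⬝ᵥ b := by
    have h0 : (0:ℝ) ≤ b ⬝ᵥ b := by
      simp only [dotProduct]
      exact Finset.sum_nonneg fun j _ => mul_self_nonneg _
    rcases lt_or_eq_of_le h0 with h | h
    · exact h
    · exact absurd (dotProduct_self_eq_zero.mp h.symm) hb
  have hnb' : b ⬝ᵥ b ≠ 0 := ne_of_gt hnb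
  -- ahat = b ⬝ᵥ b
  have hahat' : ahat = b ⬝ᵥ b := by
    rw [hahat, hS, ← Matrix.mulVec_mulVec, Matrix.dotProduct_mulVec, ← Matrix.mulVec_transpose]
  -- β in terms of b
  have hβ' : ∀ j, β j = (1 / (b ⬝ᵥ b)) * (A *ᵥ b) j := by
    intro j
    rw [hβ, hahat', hS]
    simp only [Pi.smul_apply, smul_eq_mul, ← Matrix.mulVec_mulVec]
    rfl
  -- pointwise formulas
  have hYω : ∀ ω, Y ω = a ⬝ᵥ μv + R ω * (b ⬝ᵥ U ω) := by
    intro ω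
    rw [hY, hX]
    simp only [dotProduct_add, dotProduct_smul, smul_eq_mul]
    rw [Matrix.dotProduct_mulVec, ← Matrix.mulVec_transpose]
  set c : ℝ := μv i - β i * (a ⬝ᵥ μv) with hcdef
  have hεω : ∀ ω, ε i ω = c + R ω * ((A *ᵥ U ω) i - β i * (b ⬝ᵥ U ω)) := by
    intro ω
    rw [hε, hX]
    simp only [Pi.add_apply, Pi.smul_apply, smul_eq_mul]
    rw [hYω ω]
    ring
  -- measurability
  have hdU : Measurable fun ω => b ⬝ᵥ U ω := by
    simp only [dotProduct]
    exact Finset.measurable_sum _ fun j _ => ((measurable_pi_apply j).comp hU).const_mul _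
  have hAU : Measurable fun ω => (A *ᵥ U ω) i := by
    simp only [Matrix.mulVec, dotProduct]
    exact Finset.measurable_sum _ fun j _ => ((measurable_pi_apply j).comp hU).const_mul _
  have hYm : Measurable Y := by
    have : Y = fun ω => a ⬝ᵥ μv + R ω * (b ⬝ᵥ U ω) := funext hYω
    rw [this]
    exact measurable_const.add (hR.mul hdU)
  have hBm : MeasurableSet B := hB ▸ hYm hB₁
  -- the reflection matrix
  set O : Matrix (Fin n) (Fin n) ℝ := (2 / (b ⬝ᵥ b)) • vecMulVec b b - 1 with hOdef
  have hOorth : O * Oᵀ = 1 := refl_orth b hnb'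
  have hmulO : Measurable fun u : Fin n → ℝ => O *ᵥ u := by
    apply measurable_pi_lambda
    intro j
    simp only [Matrix.mulVec, dotProduct]
    exact Finset.measurable_sum _ fun k _ => (measurable_pi_apply k).const_mul _
  -- equality of joint laws of (R, U) and (R, O *ᵥ U)
  have hindep2 : IndepFun R (fun ω => O *ᵥ U ω) P := hindep.comp measurable_id hmulO
  have hOUm : Measurable fun ω => O *ᵥ U ω := hmulO.comp hU
  have e3 : Measure.map (fun ω => (R ω, O *ᵥ U ω)) P = Measure.map (fun ω => (R ω, U ω)) P := by
    rw [(indepFun_iff_map_prod_eq_prod_map_map hR.aemeasurable hOUm.aemeasurable).mp hindep2,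
      (indepFun_iff_map_prod_eq_prod_map_map hR.aemeasurable hU.aemeasurable).mp hindep,
      hUrot O hOorth]
  have key : ∀ F : ℝ × (Fin n → ℝ) → ℝ, Measurable F →
      ∫ ω, F (R ω, U ω) ∂P = ∫ ω, F (R ω, O *ᵥ U ω) ∂P := by
    intro F hF
    have hm1 : Measurable fun ω : Ω => (R ω, U ω) := hR.prodMk hU
    have hm2 : Measurable fun ω : Ω => (R ω, O *ᵥ U ω) := hR.prodMk hOUm
    rw [← integral_map hm1.aemeasurable hF.aestronglyMeasurable,
      ← integral_map hm2.aemeasurable hF.aestronglyMeasurable, e3]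
  -- abbreviations for the two coordinate functionals
  set yf : ℝ × (Fin n → ℝ) → ℝ := fun p => a ⬝ᵥ μv + p.1 * (b ⬝ᵥ p.2) with hyfdef
  set ef : ℝ × (Fin n → ℝ) → ℝ :=
    fun p => c + p.1 * ((A *ᵥ p.2) i - β i * (b ⬝ᵥ p.2)) with hefdef
  have hyfm : Measurable yf := by
    apply measurable_const.add
    apply measurable_fst.mul
    simp only [dotProduct]
    exact Finset.measurable_sum _ fun j _ =>
      ((measurable_pi_apply j).comp measurable_snd).const_mul _
  have hefm : Measurable ef := by
    apply measurable_const.add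
    apply measurable_fst.mul
    apply Measurable.sub
    · simp only [Matrix.mulVec, dotProduct]
      exact Finset.measurable_sum _ fun j _ =>
        ((measurable_pi_apply j).comp measurable_snd).const_mul _
    · apply Measurable.const_mul
      simp only [dotProduct]
      exact Finset.measurable_sum _ fun j _ =>
        ((measurable_pi_apply j).comp measurable_snd).const_mul _
  -- the flip identities
  have hflipy : ∀ r u, yf (r, O *ᵥ u) = yf (r, u) := by
    intro r u
    simp only [hyfdef]
    rw [(refl_flip A b β i hnb' (hβ' i) u).2]
  have hflipe : ∀ r u, ef (r, O *ᵥ u) = 2 * c - ef (r, u) := by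
    intro r u
    simp only [hefdef]
    rw [(refl_flip A b β i hnb' (hβ' i) u).1]
    ring
  -- the indicator function
  set ind : ℝ → ℝ := B₁.indicator (fun _ => 1) with hinddef
  have hindm : Measurable ind := measurable_const.indicator hB₁
  have hindB : ∀ ω, ind (Y ω) = B.indicator (fun _ => (1:ℝ)) ω := by
    intro ω
    simp only [hinddef]
    by_cases h : Y ω ∈ B₁
    · rw [Set.indicator_of_mem h, Set.indicator_of_mem (by rw [hB]; exact h)]
    · rw [Set.indicator_of_notMem h, Set.indicator_of_notMem (by rw [hB]; exact h)]
  -- composite representations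
  have hYrep : ∀ ω, Y ω = yf (R ω, U ω) := fun ω => hYω ω
  have hεrep : ∀ ω, ε i ω = ef (R ω, U ω) := fun ω => hεω ω
  -- integrability
  have hY2 : MemLp Y 2 P := by
    have hYsum : Y = fun ω => ∑ j, a j * X ω j := by
      funext ω; rw [hY]; rfl
    rw [hYsum]
    exact memLp_finset_sum _ fun j _ => (hXL2 j).const_mul (a j)
  have hε2 : MemLp (ε i) 2 P := by
    rw [hε]
    exact (hXL2 i).sub (hY2.const_mul (β i))
  have hYε_int : Integrable (fun ω => Y ω * ε i ω) P := integrable_mul_of_L2 hY2 hε2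
  have hY_int : Integrable Y P := hY2.integrable one_le_two
  have hε_int : Integrable (ε i) P := hε2.integrable one_le_two
  -- First symmetry: ∫_B Y ε = c ∫_B Y
  have symm1 : ∫ ω in B, Y ω * ε i ω ∂P = c * ∫ ω in B, Y ω ∂P := by
    have hk := key (fun p => ind (yf p) * (yf p * ef p))
      ((hindm.comp hyfm).mul (hyfm.mul hefm))
    simp only [hflipy, hflipe] at hk
    have hL : ∫ ω, ind (yf (R ω, U ω)) * (yf (R ω, U ω) * ef (R ω, U ω)) ∂P
        = ∫ ω in B, Y ω * ε i ω ∂P := by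
      rw [← integral_indicator hBm]
      congr 1
      funext ω
      rw [← hYrep ω, ← hεrep ω, hindB ω]
      by_cases h : ω ∈ B
      · rw [Set.indicator_of_mem h, Set.indicator_of_mem h, one_mul]
      · rw [Set.indicator_of_notMem h, Set.indicator_of_notMem h, zero_mul]
    have hR' : ∫ ω, ind (yf (R ω, U ω)) * (yf (R ω, U ω) * (2 * c - ef (R ω, U ω))) ∂P
        = ∫ ω in B, Y ω * (2 * c - ε i ω) ∂P := by
      rw [← integral_indicator hBm]
      congr 1
      funext ω
      rw [← hYrep ω, ← hεrep ω, hindB ω]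
      by_cases h : ω ∈ B
      · rw [Set.indicator_of_mem h, Set.indicator_of_mem h, one_mul]
      · rw [Set.indicator_of_notMem h, Set.indicator_of_notMem h, zero_mul]
    rw [hL, hR'] at hk
    have hsplit : ∫ ω in B, Y ω * (2 * c - ε i ω) ∂P
        = 2 * c * ∫ ω in B, Y ω ∂P - ∫ ω in B, Y ω * ε i ω ∂P := by
      have h1 : Integrable (fun ω => 2 * c * Y ω) (P.restrict B) :=
        (hY_int.restrict.const_mul _)
      have h2 : Integrable (fun ω => Y ω * ε i ω) (P.restrict B) := hYε_int.restrict
      rw [show (fun ω => Y ω * (2 * c - ε i ω)) =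
        fun ω => 2 * c * Y ω - Y ω * ε i ω from funext fun ω => by ring]
      rw [integral_sub h1 h2, integral_const_mul]
    rw [hsplit] at hk
    linarith
  -- Second symmetry: ∫_B ε = c * P(B)
  have symm2 : ∫ ω in B, ε i ω ∂P = c * (P B).toReal := by
    have hk := key (fun p => ind (yf p) * ef p) ((hindm.comp hyfm).mul hefm)
    simp only [hflipy, hflipe] at hk
    have hL : ∫ ω, ind (yf (R ω, U ω)) * ef (R ω, U ω) ∂P = ∫ ω in B, ε i ω ∂P := by
      rw [← integral_indicator hBm]
      congr 1
      funext ω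
      rw [← hεrep ω, ← hYrep ω, hindB ω]
      by_cases h : ω ∈ B
      · rw [Set.indicator_of_mem h, Set.indicator_of_mem h, one_mul]
      · rw [Set.indicator_of_notMem h, Set.indicator_of_notMem h, zero_mul]
    have hR' : ∫ ω, ind (yf (R ω, U ω)) * (2 * c - ef (R ω, U ω)) ∂P
        = ∫ ω in B, (2 * c - ε i ω) ∂P := by
      rw [← integral_indicator hBm]
      congr 1
      funext ω
      rw [← hεrep ω, ← hYrep ω, hindB ω]
      by_cases h : ω ∈ B
      · rw [Set.indicator_of_mem h, Set.indicator_of_mem h, one_mul]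
      · rw [Set.indicator_of_notMem h, Set.indicator_of_notMem h, zero_mul]
    rw [hL, hR'] at hk
    have hsplit : ∫ ω in B, (2 * c - ε i ω) ∂P
        = 2 * c * (P B).toReal - ∫ ω in B, ε i ω ∂P := by
      rw [integral_sub (integrable_const _) hε_int.restrict, integral_const]
      simp [Measure.real, Measure.restrict_apply_univ, smul_eq_mul, mul_comm]
    rw [hsplit] at hk
    linarith
  -- conditional expectations
  have hPBne : P B ≠ 0 := ne_of_gt hBpos
  have hPBfin : P B ≠ ⊤ := measure_ne_top P B
  set k : ℝ := (P B).toReal with hkdef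
  have hkpos : 0 < k := ENNReal.toReal_pos hPBne hPBfin
  have hcondE : ∀ f : Ω → ℝ, condE P B f = k⁻¹ * ∫ ω in B, f ω ∂P := by
    intro f
    rw [condE, ProbabilityTheory.cond, integral_smul_measure, ENNReal.toReal_inv, smul_eq_mul]
  have hmε : condE P B (ε i) = c := by
    rw [hcondE, symm2]
    field_simp
  set mY : ℝ := condE P B Y with hmYdef
  have hmY : mY = k⁻¹ * ∫ ω in B, Y ω ∂P := hcondE Y
  -- final computation
  have I1 : Integrable (fun ω => Y ω * ε i ω) (P.restrict B) := hYε_int.restrict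
  have I2 : Integrable (fun ω => mY * ε i ω) (P.restrict B) := hε_int.restrict.const_mul mY
  have I3 : Integrable (fun ω => c * Y ω) (P.restrict B) := hY_int.restrict.const_mul c
  have I4 : Integrable (fun _ : Ω => mY * c) (P.restrict B) := integrable_const _
  have I12 : Integrable (fun ω => Y ω * ε i ω - mY * ε i ω) (P.restrict B) := I1.sub I2
  have I34 : Integrable (fun ω => c * Y ω - mY * c) (P.restrict B) := I3.sub I4
  have hexp : (fun ω => (Y ω - mY) * (ε i ω - c))
      = fun ω => Y ω * ε i ω - mY * ε i ω - (c * Y ω - mY * c) := by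
    funext ω; ring
  have E : ∫ ω in B, (Y ω * ε i ω - mY * ε i ω - (c * Y ω - mY * c)) ∂P
      = (∫ ω in B, Y ω * ε i ω ∂P - mY * ∫ ω in B, ε i ω ∂P)
        - (c * ∫ ω in B, Y ω ∂P - mY * c * k) := by
    rw [integral_sub I12 I34, integral_sub I1 I2, integral_sub I3 I4,
      integral_const_mul, integral_const_mul, integral_const]
    simp only [Measure.real, Measure.restrict_apply_univ, smul_eq_mul, ← hkdef]
    ring
  rw [condCov, hmε, ← hmYdef, hcondE (fun ω => (Y ω - mY) * (ε i ω - c)), hexp, E, symm1, symm2]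
  ring
end

section
/- Let (V₁, V₂) be a two-dimensional random vector with joint probability density (x, y) ↦ g(½(x² + y²)) on ℝ², where g : [0,∞) → [0,∞) is measurable, and assume E[V₂²] < ∞. Define g₁(t) := ∫_ℝ g(t + ½u²) du and h(w) := ∫₀^∞ g₁(v + ½w²) dv. Then for every Borel set B ⊆ ℝ with P[V₁ ∈ B] > 0, the conditional variance of V₂ given {V₁ ∈ B} satisfies Var[V₂ | V₁ ∈ B] = (∫_B h(w) dw) / P[V₁ ∈ B]. -/
open MeasureTheory ProbabilityTheory

/-- Conditional variance on the event `B`. -/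
noncomputable def condVar {Ω : Type*} [MeasurableSpace Ω] (P : Measure Ω) (B : Set Ω)
    (f : Ω → ℝ) : ℝ :=
  condE P B fun ω => (f ω - condE P B f) ^ 2

open Set
open scoped ENNReal


lemma myCoV {s : Set ℝ} {f f' : ℝ → ℝ}
    (hs : MeasurableSet s) (hf' : ∀ x ∈ s, HasDerivWithinAt f (f' x) s x)
    (hf : Set.InjOn f s) (g : ℝ → ℝ≥0∞) :
    ∫⁻ x in f '' s, g x = ∫⁻ x in s, ENNReal.ofReal |f' x| * g (f x) := by
  simpa only [ContinuousLinearMap.det_toSpanSingleton] using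
    MeasureTheory.lintegral_image_eq_lintegral_abs_det_fderiv_mul volume hs
      (fun x hx => (hf' x hx).hasFDerivWithinAt) hf g

lemma translate_Ioi (φ : ℝ → ℝ≥0∞) (a : ℝ) :
    ∫⁻ v in Ioi (0:ℝ), φ (v + a) = ∫⁻ s in Ioi a, φ s := by
  have himg : (fun v : ℝ => v + a) '' Ioi (0:ℝ) = Ioi a := by
    ext s; simp only [mem_image, mem_Ioi]
    constructor
    · rintro ⟨v, hv, rfl⟩; linarith
    · intro hs; exact ⟨s - a, by linarith, by ring⟩
  have := myCoV (s := Ioi (0:ℝ)) (f := fun v : ℝ => v + a) (f' := fun _ => (1:ℝ)) measurableSet_Ioi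
    (fun x _ => (hasDerivWithinAt_id x _).add_const a)
    (fun x _ y _ hxy => by simpa using hxy) φ
  rw [himg] at this
  rw [this]; simp

lemma half_line (ψ : ℝ → ℝ≥0∞) (hψ : ∀ y, ψ (-y) = ψ y) :
    ∫⁻ y, ψ y = 2 * ∫⁻ y in Ioi (0:ℝ), ψ y := by
  have h1 : ∫⁻ y in Iio (0:ℝ), ψ y = ∫⁻ y in Ioi (0:ℝ), ψ y := by
    have himg : (fun y : ℝ => -y) '' Ioi (0:ℝ) = Iio 0 := by
      simp [Set.image_neg_eq_neg]
    have := myCoV (s := Ioi (0:ℝ)) (f := fun y : ℝ => -y) (f' := fun _ => (-1:ℝ)) measurableSet_Ioi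
      (fun x _ => (hasDerivWithinAt_id x _).neg)
      (fun x _ y _ hxy => by simpa using hxy) ψ
    rw [himg] at this
    rw [this]; simp [hψ]
  have h2 : ∫⁻ y, ψ y = (∫⁻ y in Iio (0:ℝ), ψ y) + ∫⁻ y in Ici (0:ℝ), ψ y := by
    rw [← lintegral_add_compl ψ measurableSet_Iio, compl_Iio]
  have h3 : ∫⁻ y in Ici (0:ℝ), ψ y = ∫⁻ y in Ioi (0:ℝ), ψ y := by
    rw [← MeasureTheory.restrict_Ioi_eq_restrict_Ici]
  rw [h2, h1, h3, two_mul]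

lemma core (φ : ℝ → ℝ≥0∞) (hφ : Measurable φ) :
    ∫⁻ y : ℝ, ENNReal.ofReal (y ^ 2) * φ (y ^ 2 / 2)
      = ∫⁻ v in Ioi (0:ℝ), ∫⁻ u : ℝ, φ (v + u ^ 2 / 2) := by
  have hR : ∫⁻ y : ℝ, ENNReal.ofReal (y ^ 2) * φ (y ^ 2 / 2)
      = ∫⁻ s in Ioi (0:ℝ), ENNReal.ofReal (2 * Real.sqrt (2 * s)) * φ s := by
    rw [half_line _ (fun y => by rw [show (-y)^2 = y^2 by ring])]
    have himg : (fun v : ℝ => Real.sqrt (2 * v)) '' Ioi (0:ℝ) = Ioi 0 := by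
      ext y; simp only [mem_image, mem_Ioi]
      constructor
      · rintro ⟨v, hv, rfl⟩; exact Real.sqrt_pos.2 (by linarith)
      · intro hy; exact ⟨y ^ 2 / 2, by positivity,
          by rw [show 2 * (y^2/2) = y^2 by ring, Real.sqrt_sq hy.le]⟩
    have hder : ∀ v ∈ Ioi (0:ℝ), HasDerivWithinAt (fun v : ℝ => Real.sqrt (2 * v))
        (1 / Real.sqrt (2 * v)) (Ioi (0:ℝ)) v := by
      intro v hv
      have h2v : (2:ℝ) * v ≠ 0 := by simp only [mem_Ioi] at hv; positivity
      have := (Real.hasDerivAt_sqrt h2v).comp v ((hasDerivAt_id v).const_mul 2)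
      have heq : 1 / (2 * Real.sqrt (2 * v)) * (2 * 1) = 1 / Real.sqrt (2 * v) := by
        ring
      rw [heq] at this
      exact this.hasDerivWithinAt
    have hinj : Set.InjOn (fun v : ℝ => Real.sqrt (2 * v)) (Ioi (0:ℝ)) := by
      intro a ha b hb hab
      simp only [mem_Ioi] at ha hb
      have : (2:ℝ) * a = 2 * b := by
        rw [← Real.sq_sqrt (by linarith : (0:ℝ) ≤ 2 * a),
          ← Real.sq_sqrt (by linarith : (0:ℝ) ≤ 2 * b)]
        simp only at hab; rw [hab]
      linarith
    have him2 := myCoV measurableSet_Ioi hder hinj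
      (fun y => ENNReal.ofReal (y ^ 2) * φ (y ^ 2 / 2))
    rw [himg] at him2
    rw [him2, ← lintegral_const_mul' 2 _ (by norm_num)]
    apply setLIntegral_congr_fun measurableSet_Ioi
    intro v hv
    beta_reduce
    simp only [mem_Ioi] at hv
    have hs : 0 < Real.sqrt (2 * v) := Real.sqrt_pos.2 (by linarith)
    have hsq : Real.sqrt (2 * v) ^ 2 = 2 * v := Real.sq_sqrt (by linarith)
    rw [hsq, show (2:ℝ) * v / 2 = v by ring, abs_of_pos (by positivity),
      ← mul_assoc, ← mul_assoc]
    congr 1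
    rw [show (2:ℝ≥0∞) = ENNReal.ofReal 2 by norm_num,
      ← ENNReal.ofReal_mul (by norm_num), ← ENNReal.ofReal_mul (by positivity)]
    congr 1
    field_simp
    nlinarith [hsq, hs]
  rw [hR]
  have hswap1 : ∫⁻ v in Ioi (0:ℝ), ∫⁻ u : ℝ, φ (v + u ^ 2 / 2)
      = ∫⁻ u : ℝ, ∫⁻ v in Ioi (0:ℝ), φ (v + u ^ 2 / 2) := by
    apply lintegral_lintegral_swap
    exact (hφ.comp (measurable_fst.add
      ((measurable_snd.pow_const 2).div_const 2))).aemeasurable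
  rw [hswap1]
  have hstep : ∀ u : ℝ, ∫⁻ v in Ioi (0:ℝ), φ (v + u ^ 2 / 2)
      = ∫⁻ s in Ioi (0:ℝ), (Ioi (u ^ 2 / 2)).indicator φ s := by
    intro u
    rw [translate_Ioi, setLIntegral_indicator measurableSet_Ioi,
      Ioi_inter_Ioi, sup_eq_left.2 (by positivity : (0:ℝ) ≤ u ^ 2 / 2)]
  simp only [hstep]
  have hswap2 : ∫⁻ u : ℝ, ∫⁻ s in Ioi (0:ℝ), (Ioi (u ^ 2 / 2)).indicator φ s
      = ∫⁻ s in Ioi (0:ℝ), ∫⁻ u : ℝ, (Ioi (u ^ 2 / 2)).indicator φ s := by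
    apply lintegral_lintegral_swap
    have : Function.uncurry (fun u s : ℝ => (Ioi (u ^ 2 / 2)).indicator φ s)
        = {p : ℝ × ℝ | p.1 ^ 2 / 2 < p.2}.indicator (fun p => φ p.2) := by
      ext p
      by_cases hp : p.1 ^ 2 / 2 < p.2 <;>
        simp [Function.uncurry, Set.indicator, hp]
    rw [this]
    exact ((hφ.comp measurable_snd).indicator
      (measurableSet_lt ((measurable_fst.pow_const 2).div_const 2) measurable_snd)).aemeasurable
  rw [hswap2]
  apply setLIntegral_congr_fun measurableSet_Ioi
  intro s hs
  beta_reduce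
  simp only [mem_Ioi] at hs
  have hset : {u : ℝ | u ^ 2 / 2 < s} = Ioo (-Real.sqrt (2 * s)) (Real.sqrt (2 * s)) := by
    ext u
    simp only [mem_setOf_eq, mem_Ioo, ← abs_lt, Real.lt_sqrt (abs_nonneg u), sq_abs]
    constructor <;> intro <;> linarith
  have : ∀ u : ℝ, (Ioi (u ^ 2 / 2)).indicator φ s
      = {u : ℝ | u ^ 2 / 2 < s}.indicator (fun _ => φ s) u := by
    intro u
    by_cases hu : u ^ 2 / 2 < s <;> simp [Set.indicator, hu, mem_Ioi]
  simp only [this]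
  rw [lintegral_indicator_const (by rw [hset]; exact measurableSet_Ioo)]
  rw [hset, Real.volume_Ioo, mul_comm]
  congr 1
  rw [show Real.sqrt (2*s) - -Real.sqrt (2*s) = 2 * Real.sqrt (2*s) by ring]


lemma condE_eq {Ω : Type*} [MeasurableSpace Ω] (P : Measure Ω) (S : Set Ω) (f : Ω → ℝ) :
    condE P S f = (P S).toReal⁻¹ * ∫ ω in S, f ω ∂P := by
  rw [condE, ProbabilityTheory.cond, integral_smul_measure, ENNReal.toReal_inv, smul_eq_mul]

theorem spherical_density_conditional_variance_tail_density
    {Ω : Type*} [MeasurableSpace Ω] (P : Measure Ω) [IsProbabilityMeasure P]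
    (V₁ V₂ : Ω → ℝ) (hV₁ : Measurable V₁) (hV₂ : Measurable V₂)
    (g : ℝ → ℝ) (hg : Measurable g) (hgnonneg : ∀ t, 0 ≤ g t)
    -- the law of `(V₁, V₂)` has density `(x, y) ↦ g ((x² + y²)/2)` w.r.t. Lebesgue measure:
    (hlaw : Measure.map (fun ω => (V₁ ω, V₂ ω)) P
      = volume.withDensity fun p : ℝ × ℝ => ENNReal.ofReal (g ((p.1 ^ 2 + p.2 ^ 2) / 2)))
    (hV₂sq : MemLp V₂ 2 P)
    (g₁ : ℝ → ℝ) (hg₁ : g₁ = fun t => ∫ u : ℝ, g (t + u ^ 2 / 2))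
    (h : ℝ → ℝ) (hh : h = fun w => ∫ v in Set.Ioi (0 : ℝ), g₁ (v + w ^ 2 / 2))
    (B : Set ℝ) (hB : MeasurableSet B) (hBpos : 0 < P (V₁ ⁻¹' B)) :
    condVar P (V₁ ⁻¹' B) V₂ = (∫ w in B, h w) / (P (V₁ ⁻¹' B)).toReal := by
  classical
  set ρ : ℝ × ℝ → ℝ≥0∞ := fun p => ENNReal.ofReal (g ((p.1 ^ 2 + p.2 ^ 2) / 2)) with hρdef
  set μ : Measure (ℝ × ℝ) := volume.withDensity ρ with hμdef
  set S : Set Ω := V₁ ⁻¹' B with hSdef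
  set A : Set (ℝ × ℝ) := B ×ˢ (Set.univ : Set ℝ) with hAdef
  have hρmeas : Measurable ρ :=
    ENNReal.measurable_ofReal.comp (hg.comp
      (((measurable_fst.pow_const 2).add (measurable_snd.pow_const 2)).div_const 2))
  have hpair : Measurable (fun ω => (V₁ ω, V₂ ω)) := hV₁.prodMk hV₂
  have hA : MeasurableSet A := hB.prod MeasurableSet.univ
  have hSA : S = (fun ω => (V₁ ω, V₂ ω)) ⁻¹' A := by
    ext ω; simp [hSdef, hAdef]
  -- transfer of set integrals to the density measure
  have htrans : ∀ f : ℝ × ℝ → ℝ, Measurable f →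
      ∫ ω in S, f (V₁ ω, V₂ ω) ∂P = ∫ p in A, f p ∂μ := by
    intro f hf
    rw [hSA, ← hlaw, setIntegral_map hA hf.aestronglyMeasurable hpair.aemeasurable]
  -- symmetry: the measure μ is invariant under (x, y) ↦ (x, -y)
  have hT : Measurable (fun p : ℝ × ℝ => (p.1, -p.2)) :=
    measurable_fst.prodMk measurable_snd.neg
  have hTpres : MeasurePreserving (fun p : ℝ × ℝ => (p.1, -p.2))
      (volume : Measure (ℝ × ℝ)) volume := by
    rw [Measure.volume_eq_prod]
    exact (MeasurePreserving.id volume).prod (Measure.measurePreserving_neg volume)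
  have hTmap : Measure.map (fun p : ℝ × ℝ => (p.1, -p.2)) μ = μ := by
    ext s hs
    rw [Measure.map_apply hT hs, hμdef, withDensity_apply _ (hT hs), withDensity_apply _ hs]
    have : ∫⁻ p in s, ρ p ∂volume
        = ∫⁻ p in s, ρ p ∂(Measure.map (fun p : ℝ × ℝ => (p.1, -p.2)) volume) := by
      rw [hTpres.map_eq]
    rw [this, setLIntegral_map hs hρmeas hT]
    apply setLIntegral_congr_fun (hT hs)
    intro p _
    simp only [hρdef]
    congr 2
    ring
  have hmean : ∫ ω in S, V₂ ω ∂P = 0 := by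
    have h1 : ∫ ω in S, V₂ ω ∂P = ∫ p in A, p.2 ∂μ := htrans _ measurable_snd
    have hTA : (fun p : ℝ × ℝ => (p.1, -p.2)) ⁻¹' A = A := by
      ext p; simp [hAdef]
    have h2 : ∫ p in A, p.2 ∂μ = - ∫ p in A, p.2 ∂μ := by
      nth_rewrite 1 [← hTmap]
      rw [setIntegral_map hA measurable_snd.aestronglyMeasurable hT.aemeasurable, hTA]
      rw [← integral_neg]
    rw [h1]; linarith
  have hmean0 : condE P S V₂ = 0 := by
    rw [condE_eq, hmean, mul_zero]
  -- the variance is just the conditional second moment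
  have hvar : condVar P S V₂ = (P S).toReal⁻¹ * ∫ ω in S, V₂ ω ^ 2 ∂P := by
    rw [_root_.condVar, hmean0, condE_eq]
    simp only [sub_zero]
  -- second moment as an integral over A
  have hI2 : ∫ ω in S, V₂ ω ^ 2 ∂P = ∫ p in A, p.2 ^ 2 ∂μ :=
    htrans _ (measurable_snd.pow_const 2)
  -- lintegral version
  set L : ℝ≥0∞ := ∫⁻ p in A, ENNReal.ofReal (p.2 ^ 2) ∂μ with hLdef
  have hL1 : ∫ p in A, p.2 ^ 2 ∂μ = L.toReal := by
    rw [hLdef, integral_eq_lintegral_of_nonneg_ae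
      (Filter.Eventually.of_forall fun p => sq_nonneg _)
      (measurable_snd.pow_const 2).aestronglyMeasurable]
  have hLfin : L ≠ ∞ := by
    have hint : Integrable (fun ω => V₂ ω ^ 2) P := hV₂sq.integrable_sq
    have h1 := setLIntegral_map (μ := P) (g := fun ω => (V₁ ω, V₂ ω))
      (f := fun p : ℝ × ℝ => ENNReal.ofReal (p.2 ^ 2)) hA
      (measurable_snd.pow_const 2).ennreal_ofReal hpair
    rw [hlaw] at h1
    have h1' : (∫⁻ p in A, ENNReal.ofReal (p.2 ^ 2) ∂μ)
        = ∫⁻ ω in S, ENNReal.ofReal (V₂ ω ^ 2) ∂P := by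
      simpa [← hSA] using h1
    have h2 : ∫⁻ ω in S, ENNReal.ofReal (V₂ ω ^ 2) ∂P
        ≤ ∫⁻ ω, ENNReal.ofReal (V₂ ω ^ 2) ∂P := setLIntegral_le_lintegral _ _
    rw [hLdef, h1']
    exact (h2.trans_lt hint.lintegral_lt_top).ne
  -- Tonelli: L as an iterated integral
  set K : ℝ → ℝ≥0∞ := fun x => ∫⁻ y : ℝ,
    ENNReal.ofReal (y ^ 2) * ENNReal.ofReal (g ((x ^ 2 + y ^ 2) / 2)) with hKdef
  have hKmeas : Measurable K := by
    rw [hKdef]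
    exact Measurable.lintegral_prod_right'
      (f := fun p : ℝ × ℝ => ENNReal.ofReal (p.2 ^ 2) * ρ p)
      ((ENNReal.measurable_ofReal.comp (measurable_snd.pow_const 2)).mul hρmeas)
  have hLK : L = ∫⁻ x in B, K x := by
    rw [hLdef, hμdef, restrict_withDensity hA,
      lintegral_withDensity_eq_lintegral_mul _ hρmeas
      (measurable_snd.pow_const 2).ennreal_ofReal]
    have : (volume : Measure (ℝ × ℝ)).restrict A
        = (volume.restrict B).prod (volume : Measure ℝ) := by
      rw [hAdef, Measure.volume_eq_prod, ← Measure.prod_restrict, Measure.restrict_univ]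
    rw [this]
    simp only [Pi.mul_apply]
    rw [lintegral_prod (fun a : ℝ × ℝ => ρ a * ENNReal.ofReal (a.2 ^ 2)) ((hρmeas.mul
      (measurable_snd.pow_const 2).ennreal_ofReal).aemeasurable)]
    apply lintegral_congr
    intro x
    apply lintegral_congr
    intro y
    simp only [hKdef, hρdef, Pi.mul_apply]
    ring
  -- core identity : K x = ∫⁻ v in Ioi 0, G (v + x^2/2)
  set G : ℝ → ℝ≥0∞ := fun t => ∫⁻ u : ℝ, ENNReal.ofReal (g (t + u ^ 2 / 2)) with hGdef
  have hGmeas : Measurable G := by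
    rw [hGdef]
    exact Measurable.lintegral_prod_right'
      (f := fun p : ℝ × ℝ => ENNReal.ofReal (g (p.1 + p.2 ^ 2 / 2)))
      (ENNReal.measurable_ofReal.comp (hg.comp
        (measurable_fst.add ((measurable_snd.pow_const 2).div_const 2))))
  have hKH : ∀ x : ℝ, K x = ∫⁻ v in Set.Ioi (0:ℝ), G (v + x ^ 2 / 2) := by
    intro x
    have hφ : Measurable (fun s => ENNReal.ofReal (g (x ^ 2 / 2 + s))) :=
      ENNReal.measurable_ofReal.comp (hg.comp (measurable_const.add measurable_id))
    have hc := core (fun s => ENNReal.ofReal (g (x ^ 2 / 2 + s))) hφ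
    have hl : K x = ∫⁻ y : ℝ, ENNReal.ofReal (y ^ 2) *
        ENNReal.ofReal (g (x ^ 2 / 2 + y ^ 2 / 2)) := by
      rw [hKdef]
      apply lintegral_congr
      intro y
      congr 2
      ring
    rw [hl, hc]
    apply setLIntegral_congr_fun measurableSet_Ioi
    intro v _
    rw [hGdef]
    apply lintegral_congr
    intro u
    congr 2
    ring
  -- relating g₁ and h to lintegrals
  have hg₁G : ∀ t, g₁ t = (G t).toReal := by
    intro t
    simp only [hg₁, hGdef]
    rw [integral_eq_lintegral_of_nonneg_ae (f := fun u : ℝ => g (t + u ^ 2 / 2))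
      (Filter.Eventually.of_forall fun u => hgnonneg _)
      (Measurable.aestronglyMeasurable (by fun_prop))]
  have hg₁meas : Measurable g₁ := by
    have : g₁ = fun t => (G t).toReal := funext hg₁G
    rw [this]
    exact hGmeas.ennreal_toReal
  have hg₁nonneg : ∀ t, 0 ≤ g₁ t := by
    intro t; rw [hg₁G]; exact ENNReal.toReal_nonneg
  set Ht : ℝ → ℝ≥0∞ := fun w => ∫⁻ v in Set.Ioi (0:ℝ), ENNReal.ofReal (g₁ (v + w ^ 2 / 2))
    with hHtdef
  have hhHt : ∀ w, h w = (Ht w).toReal := by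
    intro w
    simp only [hh, hHtdef]
    rw [integral_eq_lintegral_of_nonneg_ae (f := fun v : ℝ => g₁ (v + w ^ 2 / 2))
      (Filter.Eventually.of_forall fun v => hg₁nonneg _)
      (Measurable.aestronglyMeasurable (by fun_prop))]
  have hHtmeas : Measurable Ht := by
    rw [hHtdef]
    exact Measurable.lintegral_prod_right'
      (f := fun p : ℝ × ℝ => ENNReal.ofReal (g₁ (p.2 + p.1 ^ 2 / 2)))
      (ENNReal.measurable_ofReal.comp (hg₁meas.comp
        (measurable_snd.add ((measurable_fst.pow_const 2).div_const 2))))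
  have hhmeas : Measurable h := by
    have : h = fun w => (Ht w).toReal := funext hhHt
    rw [this]
    exact hHtmeas.ennreal_toReal
  have hhnonneg : ∀ w, 0 ≤ h w := by
    intro w; rw [hhHt]; exact ENNReal.toReal_nonneg
  -- a.e. on B, ofReal (h w) = K w
  have hKae : ∀ᵐ w ∂(volume.restrict B), K w < ∞ := by
    apply ae_lt_top hKmeas
    rw [← hLK]; exact hLfin
  have haeeq : ∀ᵐ w ∂(volume.restrict B), ENNReal.ofReal (h w) = K w := by
    filter_upwards [hKae] with w hw
    have hH : (∫⁻ v in Set.Ioi (0:ℝ), G (v + w ^ 2 / 2)) < ∞ := by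
      rw [← hKH]; exact hw
    have hGae : ∀ᵐ v ∂(volume.restrict (Set.Ioi (0:ℝ))), G (v + w ^ 2 / 2) < ∞ :=
      ae_lt_top (hGmeas.comp (measurable_id.add_const _)) hH.ne
    have hHtH : Ht w = ∫⁻ v in Set.Ioi (0:ℝ), G (v + w ^ 2 / 2) := by
      rw [hHtdef]
      apply lintegral_congr_ae
      filter_upwards [hGae] with v hv
      rw [hg₁G, ENNReal.ofReal_toReal hv.ne]
    rw [hhHt, hHtH, ENNReal.ofReal_toReal hH.ne, hKH]
  -- the Bochner integral of h over B
  have hBint : ∫ w in B, h w = L.toReal := by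
    rw [integral_eq_lintegral_of_nonneg_ae
      (Filter.Eventually.of_forall fun w => hhnonneg w) hhmeas.aestronglyMeasurable]
    congr 1
    rw [hLK]
    exact lintegral_congr_ae haeeq
  rw [hvar, hI2, hL1, ← hBint, inv_mul_eq_div]
end

section
/- Let n ≥ 2 and let X = μ + R•(A *ᵥ U) be an elliptically distributed random vector with benchmark Y = a ⬝ᵥ X. For events B = {Y ∈ B₁} and B̂ = {Y ∈ B̂₁} (B₁, B̂₁ Borel) with P[B] > 0, P[B̂] > 0, Var_B[Y] > 0 and Var_{B̂}[Y] > 0, define k(·) := (1/(n−1))·(E_·[R²] − E_·[(Y − a⬝ᵥμ)²]/â) and k'(·) := k(·)·â / Var_·[Y]. If k'(B) = k'(B̂), then the conditional covariance matrices are proportional with ratio Var_B[Y]/Var_{B̂}[Y], namely Var_B[X] = (Var_B[Y]/Var_{B̂}[Y]) • Var_{B̂}[X]; consequently the conditional correlation matrices coincide: for all i, j with positive conditional variances, Cov_B[X_i, X_j]/√(Var_B[X_i]·Var_B[X_j]) = Cov_{B̂}[X_i, X_j]/√(Var_{B̂}[X_i]·Var_{B̂}[X_j]). -/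
open MeasureTheory ProbabilityTheory Matrix

noncomputable def reflM {n : ℕ} (v : Fin n → ℝ) : Matrix (Fin n) (Fin n) ℝ :=
  1 - (2 / (v ⬝ᵥ v)) • Matrix.vecMulVec v v

lemma vecMulVec_mulVec' {n : ℕ} (v w u : Fin n → ℝ) :
    Matrix.vecMulVec v w *ᵥ u = (w ⬝ᵥ u) • v := by
  funext i
  simp [Matrix.mulVec, Matrix.vecMulVec_apply, dotProduct, Finset.mul_sum, mul_comm,
    mul_assoc, mul_left_comm]

lemma reflM_mulVec {n : ℕ} (v : Fin n → ℝ) (u : Fin n → ℝ) :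
    reflM v *ᵥ u = u - (2 * (v ⬝ᵥ u) / (v ⬝ᵥ v)) • v := by
  funext i
  simp [reflM, Matrix.sub_mulVec, Matrix.smul_mulVec, vecMulVec_mulVec']
  ring

lemma reflM_symm {n : ℕ} (v : Fin n → ℝ) : (reflM v)ᵀ = reflM v := by
  have : (Matrix.vecMulVec v v)ᵀ = Matrix.vecMulVec v v := by
    ext i j; simp [Matrix.transpose_apply, Matrix.vecMulVec_apply]; ring
  simp [reflM, Matrix.transpose_sub, Matrix.transpose_smul, this]

lemma reflM_orth {n : ℕ} (v : Fin n → ℝ) (hv : v ≠ 0) : reflM v * (reflM v)ᵀ = 1 := by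
  have hvv : v ⬝ᵥ v ≠ 0 := by
    simpa [dotProduct_self_eq_zero] using hv
  rw [reflM_symm]
  have hMM : Matrix.vecMulVec v v * Matrix.vecMulVec v v = (v ⬝ᵥ v) • Matrix.vecMulVec v v := by
    ext i j
    simp only [Matrix.mul_apply, Matrix.vecMulVec_apply, Matrix.smul_apply, smul_eq_mul,
      dotProduct]
    rw [Finset.sum_mul]
    congr 1; funext k; ring
  simp only [reflM, Matrix.sub_mul, Matrix.mul_sub, Matrix.one_mul, Matrix.mul_one,
    Matrix.smul_mul, Matrix.mul_smul, hMM, smul_smul]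
  have h2 : 2 / (v ⬝ᵥ v) * (v ⬝ᵥ v) = 2 := div_mul_cancel₀ 2 hvv
  rw [h2]
  module


lemma measurable_dotP {γ : Type*} [MeasurableSpace γ] {n : ℕ} (c : Fin n → ℝ)
    {V : γ → Fin n → ℝ} (hV : Measurable V) : Measurable fun x => c ⬝ᵥ V x := by
  simp only [dotProduct]
  exact Finset.measurable_sum _ fun i _ => ((measurable_pi_apply i).comp hV).const_mul _

lemma measurable_mulVecU {γ : Type*} [MeasurableSpace γ] {n : ℕ}
    (O : Matrix (Fin n) (Fin n) ℝ) {V : γ → Fin n → ℝ} (hV : Measurable V) :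
    Measurable fun x => O *ᵥ V x :=
  measurable_pi_lambda _ fun i => measurable_dotP (O i) hV

lemma dotProduct_self_nonneg {n : ℕ} (v : Fin n → ℝ) : 0 ≤ v ⬝ᵥ v :=
  Finset.sum_nonneg fun i _ => mul_self_nonneg _

lemma joint_map_eq {Ω : Type*} [MeasurableSpace Ω] (P : Measure Ω) [IsProbabilityMeasure P]
    {n : ℕ} {R : Ω → ℝ} {U : Ω → Fin n → ℝ} (hR : Measurable R) (hU : Measurable U)
    (hindep : IndepFun R U P)
    (hUrot : ∀ O : Matrix (Fin n) (Fin n) ℝ, O * Oᵀ = 1 →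
      Measure.map (fun ω => O *ᵥ U ω) P = Measure.map U P)
    (O : Matrix (Fin n) (Fin n) ℝ) (hO : O * Oᵀ = 1) :
    Measure.map (fun ω => (R ω, O *ᵥ U ω)) P = Measure.map (fun ω => (R ω, U ω)) P := by
  have hOm : Measurable fun u : Fin n → ℝ => O *ᵥ u := measurable_mulVecU O measurable_id
  have hOU : Measurable fun ω => O *ᵥ U ω := hOm.comp hU
  have hind2 : IndepFun R (fun ω => O *ᵥ U ω) P := hindep.comp measurable_id hOm
  rw [(indepFun_iff_map_prod_eq_prod_map_map hR.aemeasurable hOU.aemeasurable).1 hind2,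
    (indepFun_iff_map_prod_eq_prod_map_map hR.aemeasurable hU.aemeasurable).1 hindep,
    hUrot O hO]

lemma integrable_cond {Ω : Type*} [MeasurableSpace Ω] {P : Measure Ω} {B : Set Ω}
    (hBpos : P B ≠ 0) {f : Ω → ℝ} (hf : Integrable f P) : Integrable f (P[|B]) := by
  have : Integrable f (P.restrict B) := hf.restrict
  exact this.smul_measure (ENNReal.inv_ne_top.2 hBpos)

lemma ae_cond {Ω : Type*} [MeasurableSpace Ω] {P : Measure Ω} {B : Set Ω}
    {p : Ω → Prop} (hp : ∀ᵐ ω ∂P, p ω) : ∀ᵐ ω ∂(P[|B]), p ω :=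
  Measure.ae_smul_measure (ae_restrict_of_ae hp) _

lemma integral_cov_eq {Ω : Type*} [MeasurableSpace Ω] (Q : Measure Ω) [IsProbabilityMeasure Q]
    {f g : Ω → ℝ} (hf : Integrable f Q) (hg : Integrable g Q)
    (hfg : Integrable (fun ω => f ω * g ω) Q) :
    ∫ ω, (f ω - ∫ x, f x ∂Q) * (g ω - ∫ x, g x ∂Q) ∂Q
      = ∫ ω, f ω * g ω ∂Q - (∫ ω, f ω ∂Q) * ∫ ω, g ω ∂Q := by
  set a := ∫ x, f x ∂Q with ha
  set b := ∫ x, g x ∂Q with hb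
  have h : (fun ω => (f ω - a) * (g ω - b))
      = fun ω => f ω * g ω - a * g ω - b * f ω + a * b := by
    funext ω; ring
  have i1 : Integrable (fun ω => f ω * g ω - a * g ω) Q := hfg.sub (hg.const_mul a)
  have i2 : Integrable (fun ω => f ω * g ω - a * g ω - b * f ω) Q := i1.sub (hf.const_mul b)
  rw [h, integral_add i2 (integrable_const _),
    integral_sub i1 (hf.const_mul b),
    integral_sub hfg (hg.const_mul a), integral_const_mul, integral_const_mul,
    integral_const, probReal_univ]
  simp [← ha, ← hb]; ring

lemma cond_invariance {Ω : Type*} [MeasurableSpace Ω] (P : Measure Ω) [IsProbabilityMeasure P]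
    {n : ℕ} {R : Ω → ℝ} {U : Ω → Fin n → ℝ} (hR : Measurable R) (hU : Measurable U)
    (hindep : IndepFun R U P)
    (hUrot : ∀ O : Matrix (Fin n) (Fin n) ℝ, O * Oᵀ = 1 →
      Measure.map (fun ω => O *ᵥ U ω) P = Measure.map U P)
    (w : Fin n → ℝ) (t : ℝ) (B₁ : Set ℝ) (hB₁ : MeasurableSet B₁)
    (O : Matrix (Fin n) (Fin n) ℝ) (hO : O * Oᵀ = 1) (hOw : Oᵀ *ᵥ w = w)
    (g : ℝ → (Fin n → ℝ) → ℝ) (hg : Measurable (Function.uncurry g)) :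
    ∫ ω, g (R ω) (O *ᵥ U ω) ∂(P[|(fun ω => t + R ω * (w ⬝ᵥ U ω)) ⁻¹' B₁])
      = ∫ ω, g (R ω) (U ω) ∂(P[|(fun ω => t + R ω * (w ⬝ᵥ U ω)) ⁻¹' B₁]) := by
  set B : Set Ω := (fun ω => t + R ω * (w ⬝ᵥ U ω)) ⁻¹' B₁ with hBdef
  have hYm : Measurable fun ω => t + R ω * (w ⬝ᵥ U ω) :=
    measurable_const.add (hR.mul (measurable_dotP w hU))
  have hBmeas : MeasurableSet B := hYm hB₁
  have hOUmeas : Measurable fun ω => O *ᵥ U ω := measurable_mulVecU O hU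
  have hwO : ∀ u, w ⬝ᵥ (O *ᵥ u) = w ⬝ᵥ u := fun u => by
    rw [Matrix.dotProduct_mulVec, ← Matrix.mulVec_transpose, hOw]
  set G : ℝ × (Fin n → ℝ) → ℝ :=
    fun p => Set.indicator B₁ (fun _ => (1:ℝ)) (t + p.1 * (w ⬝ᵥ p.2)) * g p.1 p.2 with hGdef
  have hGmeas : Measurable G := by
    refine Measurable.mul ?_ hg
    exact (measurable_one.indicator hB₁).comp
      (measurable_const.add (measurable_fst.mul (measurable_dotP w measurable_snd)))
  have h1 : ∀ ω, B.indicator (fun ω => g (R ω) (U ω)) ω = G (R ω, U ω) := by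
    intro ω
    by_cases hω : t + R ω * (w ⬝ᵥ U ω) ∈ B₁ <;>
      simp [hGdef, Set.indicator, hBdef, Set.mem_preimage, hω]
  have h2 : ∀ ω, B.indicator (fun ω => g (R ω) (O *ᵥ U ω)) ω = G (R ω, O *ᵥ U ω) := by
    intro ω
    by_cases hω : t + R ω * (w ⬝ᵥ U ω) ∈ B₁ <;>
      simp [hGdef, Set.indicator, hBdef, Set.mem_preimage, hω, hwO]
  rw [show P[|B] = (P B)⁻¹ • P.restrict B from rfl, integral_smul_measure, integral_smul_measure]
  congr 1
  rw [← integral_indicator hBmeas, ← integral_indicator hBmeas]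
  calc ∫ ω, B.indicator (fun ω => g (R ω) (O *ᵥ U ω)) ω ∂P
      = ∫ ω, G (R ω, O *ᵥ U ω) ∂P := by simp only [h2]
    _ = ∫ p, G p ∂(Measure.map (fun ω => (R ω, O *ᵥ U ω)) P) :=
        (integral_map (hR.prodMk hOUmeas).aemeasurable hGmeas.aestronglyMeasurable).symm
    _ = ∫ p, G p ∂(Measure.map (fun ω => (R ω, U ω)) P) := by
        rw [joint_map_eq P hR hU hindep hUrot O hO]
    _ = ∫ ω, G (R ω, U ω) ∂P :=
        integral_map (hR.prodMk hU).aemeasurable hGmeas.aestronglyMeasurable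
    _ = _ := by simp only [h1]

lemma dot_reflM {n : ℕ} (v c u : Fin n → ℝ) :
    c ⬝ᵥ (reflM v *ᵥ u) = c ⬝ᵥ u - 2 * (v ⬝ᵥ u) / (v ⬝ᵥ v) * (c ⬝ᵥ v) := by
  rw [reflM_mulVec, dotProduct_sub, dotProduct_smul, smul_eq_mul]

noncomputable def alphaI {Ω : Type*} [MeasurableSpace Ω] (Q : Measure Ω) {n : ℕ}
    (R : Ω → ℝ) (U : Ω → Fin n → ℝ) (d : Fin n → ℝ) : ℝ :=
  ∫ ω, R ω * (d ⬝ᵥ U ω) ∂Q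

noncomputable def betaI {Ω : Type*} [MeasurableSpace Ω] (Q : Measure Ω) {n : ℕ}
    (R : Ω → ℝ) (U : Ω → Fin n → ℝ) (d d' : Fin n → ℝ) : ℝ :=
  ∫ ω, R ω ^ 2 * ((d ⬝ᵥ U ω) * (d' ⬝ᵥ U ω)) ∂Q

lemma cond_structure {Ω : Type*} [MeasurableSpace Ω] (P : Measure Ω) [IsProbabilityMeasure P]
    {n : ℕ} (hn : 2 ≤ n)
    {R : Ω → ℝ} {U : Ω → Fin n → ℝ} (hR : Measurable R) (hU : Measurable U)
    (hRL2 : MemLp R 2 P)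
    (hUsphere : ∀ᵐ ω ∂P, ∑ i, U ω i ^ 2 = 1)
    (hUrot : ∀ O : Matrix (Fin n) (Fin n) ℝ, O * Oᵀ = 1 →
      Measure.map (fun ω => O *ᵥ U ω) P = Measure.map U P)
    (hindep : IndepFun R U P)
    (w : Fin n → ℝ) (hw : w ≠ 0) (t : ℝ)
    (B₁ : Set ℝ) (hB₁ : MeasurableSet B₁)
    (hBpos : P ((fun ω => t + R ω * (w ⬝ᵥ U ω)) ⁻¹' B₁) ≠ 0)
    (c c' : Fin n → ℝ) (s s' : ℝ) :
    condCov P ((fun ω => t + R ω * (w ⬝ᵥ U ω)) ⁻¹' B₁)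
        (fun ω => s + R ω * (c ⬝ᵥ U ω)) (fun ω => s' + R ω * (c' ⬝ᵥ U ω))
      = (condVar P ((fun ω => t + R ω * (w ⬝ᵥ U ω)) ⁻¹' B₁)
            (fun ω => t + R ω * (w ⬝ᵥ U ω)) / (w ⬝ᵥ w) ^ 2) * ((c ⬝ᵥ w) * (c' ⬝ᵥ w))
        + ((1 / ((n : ℝ) - 1)) *
            (condE P ((fun ω => t + R ω * (w ⬝ᵥ U ω)) ⁻¹' B₁) (fun ω => R ω ^ 2)
              - condE P ((fun ω => t + R ω * (w ⬝ᵥ U ω)) ⁻¹' B₁)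
                  (fun ω => (R ω * (w ⬝ᵥ U ω)) ^ 2) / (w ⬝ᵥ w)))
          * ((c ⬝ᵥ c') - (c ⬝ᵥ w) * (c' ⬝ᵥ w) / (w ⬝ᵥ w)) := by
  classical
  set B : Set Ω := (fun ω => t + R ω * (w ⬝ᵥ U ω)) ⁻¹' B₁ with hBdef
  set Q : Measure Ω := P[|B] with hQdef
  haveI hQprob : IsProbabilityMeasure Q := cond_isProbabilityMeasure hBpos
  have hww : (0:ℝ) < w ⬝ᵥ w := by
    rcases lt_or_eq_of_le (dotProduct_self_nonneg w) with h | h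
    · exact h
    · exact absurd ((dotProduct_self_eq_zero).1 h.symm) hw
  have hwwne : w ⬝ᵥ w ≠ 0 := ne_of_gt hww
  -- integrability
  have hIntR2 : Integrable (fun ω => R ω ^ 2) Q := integrable_cond hBpos hRL2.integrable_sq
  have hIntR : Integrable R Q := integrable_cond hBpos (hRL2.integrable one_le_two)
  have hsphereQ : ∀ᵐ ω ∂Q, ∑ i, U ω i ^ 2 = 1 := ae_cond hUsphere
  have hbound : ∀ d : Fin n → ℝ, ∀ᵐ ω ∂Q, |d ⬝ᵥ U ω| ≤ Real.sqrt (d ⬝ᵥ d) := by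
    intro d
    filter_upwards [hsphereQ] with ω hω
    have h1 : (d ⬝ᵥ U ω) ^ 2 ≤ d ⬝ᵥ d := by
      have h2 := Finset.sum_mul_sq_le_sq_mul_sq Finset.univ d (U ω)
      have e1 : d ⬝ᵥ U ω = ∑ i, d i * U ω i := rfl
      have e2 : d ⬝ᵥ d = ∑ i, d i ^ 2 := by
        simp [dotProduct, pow_two]
      rw [e1, e2]
      calc (∑ i, d i * U ω i) ^ 2 ≤ (∑ i, d i ^ 2) * ∑ i, U ω i ^ 2 := h2
        _ = ∑ i, d i ^ 2 := by rw [hω, mul_one]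
    calc |d ⬝ᵥ U ω| = Real.sqrt ((d ⬝ᵥ U ω) ^ 2) := (Real.sqrt_sq_eq_abs _).symm
      _ ≤ Real.sqrt (d ⬝ᵥ d) := Real.sqrt_le_sqrt h1
  have hIntβ : ∀ d d' : Fin n → ℝ,
      Integrable (fun ω => R ω ^ 2 * ((d ⬝ᵥ U ω) * (d' ⬝ᵥ U ω))) Q := by
    intro d d'
    refine Integrable.mono'
      (hIntR2.const_mul (Real.sqrt (d ⬝ᵥ d) * Real.sqrt (d' ⬝ᵥ d'))) ?_ ?_
    · exact ((hR.pow_const 2).mul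
        ((measurable_dotP d hU).mul (measurable_dotP d' hU))).aestronglyMeasurable
    · filter_upwards [hbound d, hbound d'] with ω h1 h2
      have h3 : |d ⬝ᵥ U ω| * |d' ⬝ᵥ U ω| ≤ Real.sqrt (d ⬝ᵥ d) * Real.sqrt (d' ⬝ᵥ d') :=
        mul_le_mul h1 h2 (abs_nonneg _) (Real.sqrt_nonneg _)
      have h4 : ‖R ω ^ 2 * ((d ⬝ᵥ U ω) * (d' ⬝ᵥ U ω))‖
          = R ω ^ 2 * (|d ⬝ᵥ U ω| * |d' ⬝ᵥ U ω|) := by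
        rw [Real.norm_eq_abs, abs_mul, abs_mul, abs_of_nonneg (sq_nonneg (R ω))]
      rw [h4]
      calc R ω ^ 2 * (|d ⬝ᵥ U ω| * |d' ⬝ᵥ U ω|)
          ≤ R ω ^ 2 * (Real.sqrt (d ⬝ᵥ d) * Real.sqrt (d' ⬝ᵥ d')) :=
            mul_le_mul_of_nonneg_left h3 (sq_nonneg _)
        _ = Real.sqrt (d ⬝ᵥ d) * Real.sqrt (d' ⬝ᵥ d') * R ω ^ 2 := mul_comm _ _
  have hIntα : ∀ d : Fin n → ℝ, Integrable (fun ω => R ω * (d ⬝ᵥ U ω)) Q := by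
    intro d
    refine Integrable.mono' (hIntR.abs.const_mul (Real.sqrt (d ⬝ᵥ d))) ?_ ?_
    · exact (hR.mul (measurable_dotP d hU)).aestronglyMeasurable
    · filter_upwards [hbound d] with ω h1
      rw [Real.norm_eq_abs, abs_mul]
      calc |R ω| * |d ⬝ᵥ U ω| ≤ |R ω| * Real.sqrt (d ⬝ᵥ d) :=
            mul_le_mul_of_nonneg_left h1 (abs_nonneg _)
        _ = Real.sqrt (d ⬝ᵥ d) * |R ω| := mul_comm _ _
  -- invariance
  have hinv : ∀ O : Matrix (Fin n) (Fin n) ℝ, O * Oᵀ = 1 → Oᵀ *ᵥ w = w →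
      ∀ g : ℝ → (Fin n → ℝ) → ℝ, Measurable (Function.uncurry g) →
      ∫ ω, g (R ω) (O *ᵥ U ω) ∂Q = ∫ ω, g (R ω) (U ω) ∂Q := by
    intro O hO hOw g hg
    exact cond_invariance P hR hU hindep hUrot w t B₁ hB₁ O hO hOw g hg
  -- (i) alpha vanishes orthogonally to w
  have hαzero : ∀ d : Fin n → ℝ, d ⬝ᵥ w = 0 → alphaI Q R U d = 0 := by
    intro d hdw
    rcases eq_or_ne d 0 with rfl | hd
    · simp [alphaI]
    · have hdd : d ⬝ᵥ d ≠ 0 := fun h => hd ((dotProduct_self_eq_zero).1 h)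
      have hOw : (reflM d)ᵀ *ᵥ w = w := by
        rw [reflM_symm, reflM_mulVec, hdw]; simp
      have hg : Measurable (Function.uncurry fun (r : ℝ) (u : Fin n → ℝ) => r * (d ⬝ᵥ u)) :=
        measurable_fst.mul (measurable_dotP d measurable_snd)
      have h := hinv (reflM d) (reflM_orth d hd) hOw (fun r u => r * (d ⬝ᵥ u)) hg
      have hpt : ∀ ω, R ω * (d ⬝ᵥ (reflM d *ᵥ U ω)) = -(R ω * (d ⬝ᵥ U ω)) := by
        intro ω
        rw [dot_reflM, div_mul_cancel₀ _ hdd]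
        ring
      simp only [hpt] at h
      rw [integral_neg] at h
      have : alphaI Q R U d = ∫ ω, R ω * (d ⬝ᵥ U ω) ∂Q := rfl
      rw [this]
      linarith [h]
  -- (ii) beta (w, d) vanishes for d ⟂ w
  have hβw0 : ∀ d : Fin n → ℝ, d ⬝ᵥ w = 0 → betaI Q R U w d = 0 := by
    intro d hdw
    rcases eq_or_ne d 0 with rfl | hd
    · simp [betaI]
    · have hdd : d ⬝ᵥ d ≠ 0 := fun h => hd ((dotProduct_self_eq_zero).1 h)
      have hwd : w ⬝ᵥ d = 0 := by rw [dotProduct_comm]; exact hdw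
      have hOw : (reflM d)ᵀ *ᵥ w = w := by
        rw [reflM_symm, reflM_mulVec, hdw]; simp
      have hg : Measurable (Function.uncurry
          fun (r : ℝ) (u : Fin n → ℝ) => r ^ 2 * ((w ⬝ᵥ u) * (d ⬝ᵥ u))) :=
        (measurable_fst.pow_const 2).mul
          ((measurable_dotP w measurable_snd).mul (measurable_dotP d measurable_snd))
      have h := hinv (reflM d) (reflM_orth d hd) hOw
        (fun r u => r ^ 2 * ((w ⬝ᵥ u) * (d ⬝ᵥ u))) hg
      have hpt : ∀ ω, R ω ^ 2 * ((w ⬝ᵥ (reflM d *ᵥ U ω)) * (d ⬝ᵥ (reflM d *ᵥ U ω)))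
          = -(R ω ^ 2 * ((w ⬝ᵥ U ω) * (d ⬝ᵥ U ω))) := by
        intro ω
        rw [dot_reflM, dot_reflM, hwd, div_mul_cancel₀ _ hdd]
        ring
      simp only [hpt] at h
      rw [integral_neg] at h
      have : betaI Q R U w d = ∫ ω, R ω ^ 2 * ((w ⬝ᵥ U ω) * (d ⬝ᵥ U ω)) ∂Q := rfl
      rw [this]
      linarith [h]
  -- bilinearity
  have hβcomm : ∀ d d' : Fin n → ℝ, betaI Q R U d d' = betaI Q R U d' d := by
    intro d d'
    have h : (fun ω => R ω ^ 2 * ((d ⬝ᵥ U ω) * (d' ⬝ᵥ U ω)))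
        = fun ω => R ω ^ 2 * ((d' ⬝ᵥ U ω) * (d ⬝ᵥ U ω)) := by
      funext ω; ring
    simp only [betaI, h]
  have hβadd₁ : ∀ d e d' : Fin n → ℝ,
      betaI Q R U (d + e) d' = betaI Q R U d d' + betaI Q R U e d' := by
    intro d e d'
    have h : (fun ω => R ω ^ 2 * (((d + e) ⬝ᵥ U ω) * (d' ⬝ᵥ U ω)))
        = fun ω => R ω ^ 2 * ((d ⬝ᵥ U ω) * (d' ⬝ᵥ U ω))
            + R ω ^ 2 * ((e ⬝ᵥ U ω) * (d' ⬝ᵥ U ω)) := by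
      funext ω; rw [add_dotProduct]; ring
    simp only [betaI, h]
    exact integral_add (hIntβ d d') (hIntβ e d')
  have hβsmul₁ : ∀ (x : ℝ) (d d' : Fin n → ℝ),
      betaI Q R U (x • d) d' = x * betaI Q R U d d' := by
    intro x d d'
    have h : (fun ω => R ω ^ 2 * (((x • d) ⬝ᵥ U ω) * (d' ⬝ᵥ U ω)))
        = fun ω => x * (R ω ^ 2 * ((d ⬝ᵥ U ω) * (d' ⬝ᵥ U ω))) := by
      funext ω; rw [smul_dotProduct]; simp [smul_eq_mul]; ring
    simp only [betaI, h]
    exact integral_const_mul x _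
  have hβadd₂ : ∀ d d' e' : Fin n → ℝ,
      betaI Q R U d (d' + e') = betaI Q R U d d' + betaI Q R U d e' := by
    intro d d' e'
    rw [hβcomm, hβadd₁, hβcomm d' d, hβcomm e' d]
  have hβsmul₂ : ∀ (x : ℝ) (d d' : Fin n → ℝ),
      betaI Q R U d (x • d') = x * betaI Q R U d d' := by
    intro x d d'
    rw [hβcomm, hβsmul₁, hβcomm d' d]
  -- equal diagonal values for orthogonal vectors of equal norms
  have hβdiag_eq : ∀ d d' : Fin n → ℝ, d ⬝ᵥ w = 0 → d' ⬝ᵥ w = 0 → d ⬝ᵥ d = d' ⬝ᵥ d' →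
      betaI Q R U d d = betaI Q R U d' d' := by
    intro d d' hdw hd'w hnorm
    rcases eq_or_ne d d' with rfl | hne
    · rfl
    · set v : Fin n → ℝ := d - d' with hvdef
      have hv : v ≠ 0 := sub_ne_zero.2 hne
      have hvv : v ⬝ᵥ v ≠ 0 := fun h => hv ((dotProduct_self_eq_zero).1 h)
      have hvw : v ⬝ᵥ w = 0 := by
        rw [hvdef, sub_dotProduct, hdw, hd'w, sub_zero]
      have hOw : (reflM v)ᵀ *ᵥ w = w := by
        rw [reflM_symm, reflM_mulVec, hvw]; simp
      have hcomm : d' ⬝ᵥ d = d ⬝ᵥ d' := dotProduct_comm _ _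
      have key : 2 * (v ⬝ᵥ d) = v ⬝ᵥ v := by
        rw [hvdef, sub_dotProduct, sub_dotProduct, dotProduct_sub,
          dotProduct_sub]
        linarith [hnorm, hcomm]
      have hpt : ∀ u : Fin n → ℝ, d ⬝ᵥ (reflM v *ᵥ u) = d' ⬝ᵥ u := by
        intro u
        rw [dot_reflM]
        have hdv : d ⬝ᵥ v = v ⬝ᵥ d := dotProduct_comm _ _
        have h5 : 2 * (v ⬝ᵥ u) / (v ⬝ᵥ v) * (d ⬝ᵥ v) = v ⬝ᵥ u := by
          rw [hdv]
          calc 2 * (v ⬝ᵥ u) / (v ⬝ᵥ v) * (v ⬝ᵥ d)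
              = (v ⬝ᵥ u) * (2 * (v ⬝ᵥ d)) / (v ⬝ᵥ v) := by ring
            _ = (v ⬝ᵥ u) * (v ⬝ᵥ v) / (v ⬝ᵥ v) := by rw [key]
            _ = v ⬝ᵥ u := by field_simp
        rw [h5, hvdef, sub_dotProduct]
        ring
      have hg : Measurable (Function.uncurry
          fun (r : ℝ) (u : Fin n → ℝ) => r ^ 2 * ((d ⬝ᵥ u) * (d ⬝ᵥ u))) :=
        (measurable_fst.pow_const 2).mul
          ((measurable_dotP d measurable_snd).mul (measurable_dotP d measurable_snd))
      have h := hinv (reflM v) (reflM_orth v hv) hOw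
        (fun r u => r ^ 2 * ((d ⬝ᵥ u) * (d ⬝ᵥ u))) hg
      simp only [hpt] at h
      exact h.symm
  -- a nonzero vector orthogonal to w
  obtain ⟨i0, hi0⟩ : ∃ i, w i ≠ 0 := by
    by_contra h
    push_neg at h
    exact hw (funext fun i => h i)
  haveI : Nontrivial (Fin n) :=
    ⟨⟨⟨0, by omega⟩, ⟨1, by omega⟩, by simp [Fin.ext_iff]⟩⟩
  obtain ⟨j0, hj0⟩ : ∃ j : Fin n, j ≠ i0 := exists_ne i0
  set q₀ : Fin n → ℝ :=
    (fun k => (if k = i0 then w j0 else 0) - (if k = j0 then w i0 else 0)) with hq₀def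
  have hq₀w : q₀ ⬝ᵥ w = 0 := by
    simp only [hq₀def, dotProduct, sub_mul, Finset.sum_sub_distrib, ite_mul, zero_mul,
      Finset.sum_ite_eq', Finset.mem_univ, if_true]
    ring
  have hq₀ne : q₀ ≠ 0 := by
    intro h
    have h2 := congrFun h j0
    simp [hq₀def, hj0] at h2
    exact hi0 h2
  have hq₀dd : 0 < q₀ ⬝ᵥ q₀ := by
    rcases lt_or_eq_of_le (dotProduct_self_nonneg q₀) with h | h
    · exact h
    · exact absurd ((dotProduct_self_eq_zero).1 h.symm) hq₀ne
  set m : ℝ := betaI Q R U q₀ q₀ / (q₀ ⬝ᵥ q₀) with hmdef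
  -- diagonal values
  have hdiag : ∀ d : Fin n → ℝ, d ⬝ᵥ w = 0 → betaI Q R U d d = m * (d ⬝ᵥ d) := by
    intro d hdw
    rcases eq_or_ne d 0 with rfl | hd
    · simp [betaI]
    · have hddpos : 0 < d ⬝ᵥ d := by
        rcases lt_or_eq_of_le (dotProduct_self_nonneg d) with h | h
        · exact h
        · exact absurd ((dotProduct_self_eq_zero).1 h.symm) hd
      set x : ℝ := Real.sqrt (q₀ ⬝ᵥ q₀) / Real.sqrt (d ⬝ᵥ d) with hxdef
      have hx2 : x ^ 2 = (q₀ ⬝ᵥ q₀) / (d ⬝ᵥ d) := by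
        rw [hxdef, div_pow, Real.sq_sqrt hq₀dd.le, Real.sq_sqrt hddpos.le]
      have h1 : (x • d) ⬝ᵥ w = 0 := by
        rw [smul_dotProduct, hdw, smul_zero]
      have h2 : (x • d) ⬝ᵥ (x • d) = q₀ ⬝ᵥ q₀ := by
        rw [smul_dotProduct, dotProduct_smul, smul_eq_mul, smul_eq_mul]
        calc x * (x * (d ⬝ᵥ d)) = x ^ 2 * (d ⬝ᵥ d) := by ring
          _ = q₀ ⬝ᵥ q₀ := by rw [hx2]; field_simp
      have h3 := hβdiag_eq (x • d) q₀ h1 hq₀w h2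
      have h4 : betaI Q R U (x • d) (x • d) = x ^ 2 * betaI Q R U d d := by
        rw [hβsmul₁, hβsmul₂]; ring
      have h5 : x ^ 2 * betaI Q R U d d = betaI Q R U q₀ q₀ := by rw [← h4, h3]
      rw [hx2] at h5
      rw [hmdef]
      field_simp at h5 ⊢
      linarith [h5]
  -- polarization
  have hoff : ∀ d d' : Fin n → ℝ, d ⬝ᵥ w = 0 → d' ⬝ᵥ w = 0 →
      betaI Q R U d d' = m * (d ⬝ᵥ d') := by
    intro d d' hdw hd'w
    have hsumw : (d + d') ⬝ᵥ w = 0 := by rw [add_dotProduct, hdw, hd'w, add_zero]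
    have hexp : betaI Q R U (d + d') (d + d')
        = betaI Q R U d d + 2 * betaI Q R U d d' + betaI Q R U d' d' := by
      rw [hβadd₁, hβadd₂, hβadd₂, hβcomm d' d]; ring
    have hdot : (d + d') ⬝ᵥ (d + d') = d ⬝ᵥ d + 2 * (d ⬝ᵥ d') + d' ⬝ᵥ d' := by
      rw [add_dotProduct, dotProduct_add, dotProduct_add,
        dotProduct_comm d' d]
      ring
    have h1 := hdiag (d + d') hsumw
    have h2 := hdiag d hdw
    have h3 := hdiag d' hd'w
    rw [hexp, hdot] at h1
    linarith [h1, h2, h3]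
  -- full bilinear expansion
  have hβdecomp : ∀ d d' : Fin n → ℝ, betaI Q R U d d'
      = (d ⬝ᵥ w) * (d' ⬝ᵥ w) / (w ⬝ᵥ w) ^ 2 * betaI Q R U w w
        + m * ((d ⬝ᵥ d') - (d ⬝ᵥ w) * (d' ⬝ᵥ w) / (w ⬝ᵥ w)) := by
    intro d d'
    set p : ℝ := (d ⬝ᵥ w) / (w ⬝ᵥ w) with hpdef
    set p' : ℝ := (d' ⬝ᵥ w) / (w ⬝ᵥ w) with hp'def
    set dd : Fin n → ℝ := d - p • w with hdddef
    set dd' : Fin n → ℝ := d' - p' • w with hdd'def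
    have hddw : dd ⬝ᵥ w = 0 := by
      rw [hdddef, sub_dotProduct, smul_dotProduct, smul_eq_mul, hpdef]
      field_simp
      ring
    have hdd'w : dd' ⬝ᵥ w = 0 := by
      rw [hdd'def, sub_dotProduct, smul_dotProduct, smul_eq_mul, hp'def]
      field_simp
      ring
    have hd : d = p • w + dd := by rw [hdddef]; abel
    have hd' : d' = p' • w + dd' := by rw [hdd'def]; abel
    have hexp : betaI Q R U d d'
        = p * p' * betaI Q R U w w + p * betaI Q R U w dd'
          + p' * betaI Q R U dd w + betaI Q R U dd dd' := by
      conv_lhs => rw [hd, hd']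
      rw [hβadd₁, hβadd₂, hβadd₂, hβsmul₁, hβsmul₁, hβsmul₂, hβsmul₂]
      ring
    rw [hexp, hβw0 dd' hdd'w, hβcomm dd w, hβw0 dd hddw, hoff dd dd' hddw hdd'w]
    have hdot : dd ⬝ᵥ dd' = (d ⬝ᵥ d') - (d ⬝ᵥ w) * (d' ⬝ᵥ w) / (w ⬝ᵥ w) := by
      rw [hdddef, hdd'def, sub_dotProduct, dotProduct_sub, dotProduct_sub,
        smul_dotProduct, dotProduct_smul, dotProduct_smul,
        smul_dotProduct, smul_eq_mul, smul_eq_mul, smul_eq_mul, smul_eq_mul,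
        dotProduct_comm w d', hpdef, hp'def]
      field_simp
      try ring
    rw [hdot, hpdef, hp'def]
    field_simp
    try ring
  -- alpha decomposition
  have hαadd : ∀ d e : Fin n → ℝ, alphaI Q R U (d + e) = alphaI Q R U d + alphaI Q R U e := by
    intro d e
    have h : (fun ω => R ω * ((d + e) ⬝ᵥ U ω))
        = fun ω => R ω * (d ⬝ᵥ U ω) + R ω * (e ⬝ᵥ U ω) := by
      funext ω; rw [add_dotProduct]; ring
    simp only [alphaI, h]
    exact integral_add (hIntα d) (hIntα e)
  have hαsmul : ∀ (x : ℝ) (d : Fin n → ℝ), alphaI Q R U (x • d) = x * alphaI Q R U d := by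
    intro x d
    have h : (fun ω => R ω * ((x • d) ⬝ᵥ U ω))
        = fun ω => x * (R ω * (d ⬝ᵥ U ω)) := by
      funext ω; rw [smul_dotProduct, smul_eq_mul]; ring
    simp only [alphaI, h]
    exact integral_const_mul x _
  have hαdecomp : ∀ d : Fin n → ℝ,
      alphaI Q R U d = (d ⬝ᵥ w) / (w ⬝ᵥ w) * alphaI Q R U w := by
    intro d
    set p : ℝ := (d ⬝ᵥ w) / (w ⬝ᵥ w) with hpdef
    set dd : Fin n → ℝ := d - p • w with hdddef
    have hddw : dd ⬝ᵥ w = 0 := by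
      rw [hdddef, sub_dotProduct, smul_dotProduct, smul_eq_mul, hpdef]
      field_simp
      ring
    have hd : d = p • w + dd := by rw [hdddef]; abel
    conv_lhs => rw [hd]
    rw [hαadd, hαsmul, hαzero dd hddw, add_zero]
  -- trace identity
  have hsum1 : ∑ i, betaI Q R U (Pi.single i 1) (Pi.single i 1) = ∫ ω, R ω ^ 2 ∂Q := by
    have hei : ∀ i, (fun ω => R ω ^ 2 * ((Pi.single i 1 ⬝ᵥ U ω) * (Pi.single i 1 ⬝ᵥ U ω)))
        = fun ω => R ω ^ 2 * (U ω i * U ω i) := by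
      intro i; funext ω; rw [single_dotProduct, one_mul]
    have hint : ∀ i, Integrable (fun ω => R ω ^ 2 * (U ω i * U ω i)) Q :=
      fun i => hei i ▸ hIntβ (Pi.single i 1) (Pi.single i 1)
    calc ∑ i, betaI Q R U (Pi.single i 1) (Pi.single i 1)
        = ∑ i, ∫ ω, R ω ^ 2 * (U ω i * U ω i) ∂Q := by
          refine Finset.sum_congr rfl fun i _ => ?_
          simp only [betaI, hei i]
      _ = ∫ ω, ∑ i, R ω ^ 2 * (U ω i * U ω i) ∂Q :=
          (integral_finset_sum _ fun i _ => hint i).symm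
      _ = ∫ ω, R ω ^ 2 ∂Q := by
          refine integral_congr_ae ?_
          filter_upwards [hsphereQ] with ω hω
          rw [← Finset.mul_sum]
          have : ∑ i, U ω i * U ω i = 1 := by
            rw [← hω]; exact Finset.sum_congr rfl fun i _ => (pow_two (U ω i)).symm
          rw [this, mul_one]
  have hsww : ∑ i, w i * w i = w ⬝ᵥ w := rfl
  have hn1 : ((n : ℝ) - 1) ≠ 0 := by
    have : (2 : ℝ) ≤ (n : ℝ) := by exact_mod_cast hn
    linarith
  have htr : ∫ ω, R ω ^ 2 ∂Q = betaI Q R U w w / (w ⬝ᵥ w) + m * ((n : ℝ) - 1) := by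
    rw [← hsum1]
    have hstep : ∀ i, betaI Q R U (Pi.single i 1) (Pi.single i 1)
        = (w i * w i) / (w ⬝ᵥ w) ^ 2 * betaI Q R U w w
          + m * (1 - (w i * w i) / (w ⬝ᵥ w)) := by
      intro i
      have he1 : Pi.single i (1:ℝ) ⬝ᵥ w = w i := by
        rw [single_dotProduct, one_mul]
      have he2 : Pi.single i (1:ℝ) ⬝ᵥ Pi.single i (1:ℝ) = 1 := by
        rw [single_dotProduct, one_mul, Pi.single_eq_same]
      rw [hβdecomp, he1, he2]
    rw [Finset.sum_congr rfl fun i _ => hstep i]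
    rw [Finset.sum_add_distrib, ← Finset.sum_mul, ← Finset.mul_sum, Finset.sum_sub_distrib,
      Finset.sum_const, Finset.card_univ, Fintype.card_fin, ← Finset.sum_div, ← Finset.sum_div,
      hsww]
    have : (w ⬝ᵥ w) / (w ⬝ᵥ w) ^ 2 = 1 / (w ⬝ᵥ w) := by field_simp
    rw [this]
    field_simp
    try ring
  have hm2 : m = (1 / ((n : ℝ) - 1)) * ((∫ ω, R ω ^ 2 ∂Q) - betaI Q R U w w / (w ⬝ᵥ w)) := by
    rw [htr]
    field_simp
    ring
  -- final assembly
  have hprod : ∀ d d' : Fin n → ℝ,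
      Integrable (fun ω => (R ω * (d ⬝ᵥ U ω)) * (R ω * (d' ⬝ᵥ U ω))) Q := by
    intro d d'
    have h : (fun ω => (R ω * (d ⬝ᵥ U ω)) * (R ω * (d' ⬝ᵥ U ω)))
        = fun ω => R ω ^ 2 * ((d ⬝ᵥ U ω) * (d' ⬝ᵥ U ω)) := by
      funext ω; ring
    rw [h]; exact hIntβ d d'
  have hprodint : ∀ d d' : Fin n → ℝ,
      ∫ ω, (R ω * (d ⬝ᵥ U ω)) * (R ω * (d' ⬝ᵥ U ω)) ∂Q = betaI Q R U d d' := by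
    intro d d'
    have h : (fun ω => (R ω * (d ⬝ᵥ U ω)) * (R ω * (d' ⬝ᵥ U ω)))
        = fun ω => R ω ^ 2 * ((d ⬝ᵥ U ω) * (d' ⬝ᵥ U ω)) := by
      funext ω; ring
    rw [h]; rfl
  have hαE : ∀ (d : Fin n → ℝ) (x : ℝ),
      condE P B (fun ω => x + R ω * (d ⬝ᵥ U ω)) = x + alphaI Q R U d := by
    intro d x
    show ∫ ω, (x + R ω * (d ⬝ᵥ U ω)) ∂Q = x + alphaI Q R U d
    rw [integral_add (integrable_const x) (hIntα d), integral_const]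
    simp [alphaI, measure_univ]
  have hcov : condCov P B (fun ω => s + R ω * (c ⬝ᵥ U ω)) (fun ω => s' + R ω * (c' ⬝ᵥ U ω))
      = betaI Q R U c c' - alphaI Q R U c * alphaI Q R U c' := by
    simp only [condCov]
    simp only [hαE]
    have hfun : (fun ω => (s + R ω * (c ⬝ᵥ U ω) - (s + alphaI Q R U c))
        * (s' + R ω * (c' ⬝ᵥ U ω) - (s' + alphaI Q R U c')))
        = fun ω => (R ω * (c ⬝ᵥ U ω) - ∫ x, R x * (c ⬝ᵥ U x) ∂Q)
            * (R ω * (c' ⬝ᵥ U ω) - ∫ x, R x * (c' ⬝ᵥ U x) ∂Q) := by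
      funext ω
      simp only [alphaI]
      ring
    simp only [condE, ← hQdef, hfun]
    rw [integral_cov_eq Q (hIntα c) (hIntα c') (hprod c c'), hprodint c c']
    rfl
  have hvar : condVar P B (fun ω => t + R ω * (w ⬝ᵥ U ω))
      = betaI Q R U w w - alphaI Q R U w * alphaI Q R U w := by
    simp only [_root_.condVar]
    simp only [hαE]
    have hfun : (fun ω => (t + R ω * (w ⬝ᵥ U ω) - (t + alphaI Q R U w)) ^ 2)
        = fun ω => (R ω * (w ⬝ᵥ U ω) - ∫ x, R x * (w ⬝ᵥ U x) ∂Q)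
            * (R ω * (w ⬝ᵥ U ω) - ∫ x, R x * (w ⬝ᵥ U x) ∂Q) := by
      funext ω
      simp only [alphaI]
      ring
    simp only [condE, ← hQdef, hfun]
    rw [integral_cov_eq Q (hIntα w) (hIntα w) (hprod w w), hprodint w w]
    rfl
  have hR2E : condE P B (fun ω => R ω ^ 2) = ∫ ω, R ω ^ 2 ∂Q := by
    simp only [condE, ← hQdef]
  have hsqE : condE P B (fun ω => (R ω * (w ⬝ᵥ U ω)) ^ 2) = betaI Q R U w w := by
    simp only [condE, ← hQdef]
    have hfun : (fun ω => (R ω * (w ⬝ᵥ U ω)) ^ 2)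
        = fun ω => R ω ^ 2 * ((w ⬝ᵥ U ω) * (w ⬝ᵥ U ω)) := by
      funext ω; ring
    rw [hfun]; rfl
  rw [hcov, hvar, hR2E, hsqE, hβdecomp c c', hαdecomp c, hαdecomp c', ← hm2]
  field_simp
  ring

theorem equal_Kprime_invariants_imply_proportional_cov_and_equal_corr
    {Ω : Type*} [MeasurableSpace Ω] (P : Measure Ω) [IsProbabilityMeasure P]
    (n : ℕ) (hn : 2 ≤ n)
    (R : Ω → ℝ) (U : Ω → Fin n → ℝ) (hR : Measurable R) (hU : Measurable U)
    (hRpos : ∀ᵐ ω ∂P, 0 < R ω)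
    (hR2 : ∫ ω, R ω ^ 2 ∂P = (n : ℝ))
    (hRL2 : MemLp R 2 P)
    (hUsphere : ∀ᵐ ω ∂P, ∑ i, U ω i ^ 2 = 1)
    (hUrot : ∀ O : Matrix (Fin n) (Fin n) ℝ, O * Oᵀ = 1 →
      Measure.map (fun ω => O *ᵥ U ω) P = Measure.map U P)
    (hindep : IndepFun R U P)
    (μv : Fin n → ℝ) (A : Matrix (Fin n) (Fin n) ℝ) (hA : IsUnit A.det)
    (a : Fin n → ℝ) (ha : a ≠ 0)
    (X : Ω → Fin n → ℝ) (hX : X = fun ω => μv + R ω • (A *ᵥ U ω))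
    (Y : Ω → ℝ) (hY : Y = fun ω => a ⬝ᵥ X ω)
    (hXL2 : ∀ i, MemLp (fun ω => X ω i) 2 P)
    (ahat : ℝ) (hahat : ahat = a ⬝ᵥ ((A * Aᵀ) *ᵥ a))
    (B₁ Bhat₁ : Set ℝ) (hB₁ : MeasurableSet B₁) (hBhat₁ : MeasurableSet Bhat₁)
    (B Bhat : Set Ω) (hB : B = Y ⁻¹' B₁) (hBhat : Bhat = Y ⁻¹' Bhat₁)
    (hBpos : 0 < P B) (hBhatpos : 0 < P Bhat)
    (hVarYpos : 0 < condVar P B Y) (hVarYhatpos : 0 < condVar P Bhat Y)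
    (kB kBhat : ℝ)
    (hkB : kB = (1 / ((n : ℝ) - 1)) *
      (condE P B (fun ω => R ω ^ 2) - condE P B (fun ω => (Y ω - a ⬝ᵥ μv) ^ 2) / ahat))
    (hkBhat : kBhat = (1 / ((n : ℝ) - 1)) *
      (condE P Bhat (fun ω => R ω ^ 2) - condE P Bhat (fun ω => (Y ω - a ⬝ᵥ μv) ^ 2) / ahat))
    (hKeq : kB * ahat / condVar P B Y = kBhat * ahat / condVar P Bhat Y) :
    (∀ i j, condCov P B (fun ω => X ω i) (fun ω => X ω j)
      = (condVar P B Y / condVar P Bhat Y)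
          * condCov P Bhat (fun ω => X ω i) (fun ω => X ω j)) ∧
    (∀ i j, 0 < condVar P B (fun ω => X ω i) → 0 < condVar P B (fun ω => X ω j) →
      0 < condVar P Bhat (fun ω => X ω i) → 0 < condVar P Bhat (fun ω => X ω j) →
      condCov P B (fun ω => X ω i) (fun ω => X ω j)
          / Real.sqrt (condVar P B (fun ω => X ω i) * condVar P B (fun ω => X ω j))
        = condCov P Bhat (fun ω => X ω i) (fun ω => X ω j)
          / Real.sqrt (condVar P Bhat (fun ω => X ω i)
              * condVar P Bhat (fun ω => X ω j))) := by
  classical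
  set w : Fin n → ℝ := Aᵀ *ᵥ a with hwdef
  have hw : w ≠ 0 := by
    intro h
    haveI : Invertible Aᵀ := A.transpose.invertibleOfIsUnitDet (by rwa [Matrix.det_transpose])
    have h2 : (⅟Aᵀ) *ᵥ (Aᵀ *ᵥ a) = a := by
      rw [Matrix.mulVec_mulVec, invOf_mul_self, Matrix.one_mulVec]
    rw [hwdef] at h
    rw [h, Matrix.mulVec_zero] at h2
    exact ha h2.symm
  have hww : (0:ℝ) < w ⬝ᵥ w := by
    rcases lt_or_eq_of_le (dotProduct_self_nonneg w) with h | h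
    · exact h
    · exact absurd ((dotProduct_self_eq_zero).1 h.symm) hw
  have hahat2 : ahat = w ⬝ᵥ w := by
    rw [hahat, ← Matrix.mulVec_mulVec, Matrix.dotProduct_mulVec, ← Matrix.mulVec_transpose]
  have hahatpos : 0 < ahat := by rw [hahat2]; exact hww
  have hY' : Y = fun ω => (a ⬝ᵥ μv) + R ω * (w ⬝ᵥ U ω) := by
    funext ω
    rw [hY, hX]
    simp only [dotProduct_add, dotProduct_smul, smul_eq_mul]
    congr 1
    rw [Matrix.dotProduct_mulVec, ← Matrix.mulVec_transpose]
  have hXi : ∀ i, (fun ω => X ω i) = fun ω => μv i + R ω * (A i ⬝ᵥ U ω) := by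
    intro i
    funext ω
    rw [hX]
    simp [Matrix.mulVec, dotProduct]
  -- master formula for any conditioning event
  have key : ∀ (C₁ : Set ℝ), MeasurableSet C₁ → ∀ (C : Set Ω), C = Y ⁻¹' C₁ → 0 < P C →
      ∀ i j : Fin n,
      condCov P C (fun ω => X ω i) (fun ω => X ω j)
        = (condVar P C Y / ahat ^ 2) * ((A i ⬝ᵥ w) * (A j ⬝ᵥ w))
          + ((1 / ((n : ℝ) - 1)) * (condE P C (fun ω => R ω ^ 2)
              - condE P C (fun ω => (Y ω - a ⬝ᵥ μv) ^ 2) / ahat))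
            * ((A i ⬝ᵥ A j) - (A i ⬝ᵥ w) * (A j ⬝ᵥ w) / ahat) := by
    intro C₁ hC₁ C hC hCpos i j
    have hCeq : C = (fun ω => (a ⬝ᵥ μv) + R ω * (w ⬝ᵥ U ω)) ⁻¹' C₁ := by rw [hC, hY']
    have h := cond_structure P hn hR hU hRL2 hUsphere hUrot hindep w hw (a ⬝ᵥ μv) C₁ hC₁
      (by rw [← hCeq]; exact hCpos.ne') (A i) (A j) (μv i) (μv j)
    rw [← hCeq] at h
    have hsq : (fun ω => (Y ω - a ⬝ᵥ μv) ^ 2) = fun ω => (R ω * (w ⬝ᵥ U ω)) ^ 2 := by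
      funext ω; rw [hY']; ring
    rw [hXi i, hXi j, hahat2, hsq, hY']
    exact h
  -- relation between kB and kBhat
  have hVBne : condVar P B Y ≠ 0 := ne_of_gt hVarYpos
  have hVBhne : condVar P Bhat Y ≠ 0 := ne_of_gt hVarYhatpos
  have hkrel : kB = condVar P B Y / condVar P Bhat Y * kBhat := by
    have h0 : kB = kB * ahat / condVar P B Y * condVar P B Y / ahat := by
      field_simp
    rw [h0, hKeq]
    field_simp
  have part1 : ∀ i j, condCov P B (fun ω => X ω i) (fun ω => X ω j)
      = (condVar P B Y / condVar P Bhat Y)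
          * condCov P Bhat (fun ω => X ω i) (fun ω => X ω j) := by
    intro i j
    rw [key B₁ hB₁ B hB hBpos i j, key Bhat₁ hBhat₁ Bhat hBhat hBhatpos i j, ← hkB, ← hkBhat,
      hkrel]
    field_simp
  refine ⟨part1, ?_⟩
  intro i j h1 h2 h3 h4
  have hvc : ∀ (C : Set Ω) (f : Ω → ℝ), condVar P C f = condCov P C f f := by
    intro C f
    simp only [_root_.condVar, condCov, pow_two]
  set r : ℝ := condVar P B Y / condVar P Bhat Y with hrdef
  have hrpos : 0 < r := div_pos hVarYpos hVarYhatpos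
  have hvi : condVar P B (fun ω => X ω i) = r * condVar P Bhat (fun ω => X ω i) := by
    rw [hvc, hvc]; exact part1 i i
  have hvj : condVar P B (fun ω => X ω j) = r * condVar P Bhat (fun ω => X ω j) := by
    rw [hvc, hvc]; exact part1 j j
  have hprod : condVar P B (fun ω => X ω i) * condVar P B (fun ω => X ω j)
      = r ^ 2 * (condVar P Bhat (fun ω => X ω i) * condVar P Bhat (fun ω => X ω j)) := by
    rw [hvi, hvj]; ring
  rw [part1 i j, hprod, Real.sqrt_mul (sq_nonneg r), Real.sqrt_sq hrpos.le,
    mul_div_mul_left _ _ (ne_of_gt hrpos)]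
end
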